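/- arXiv:1603.09510 — 7 statements merged into one kernel-verified Lean document; each statement's English description precedes it below -/
import Mathlib

section
/- Let G be a Polish group and let A be a subset of G. Then A is Haar meager if and only if there exist a Borel set B ⊆ G with A ⊆ B and a continuous map f : 2^ℕ → G from the Cantor space 2^ℕ such that f⁻¹(g·B·h) is meager in 2^ℕ for every g, h ∈ G. -/
namespace HaarMeagerAux


set_option linter.unusedSectionVars false
set_option maxHeartbeats 1000000

open Set Metric

variable {K : Type} [MetricSpace K] [CompactSpace K] [Nonempty K]

/-- Union of a list of sets. -/
def Dl (L : List (Set K)) : Set K := {y | ∃ P ∈ L, y ∈ P}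

lemma Dl_nil : Dl ([] : List (Set K)) = ∅ := by ext y; simp [Dl]

lemma Dl_cons (a : Set K) (l : List (Set K)) : Dl (a :: l) = a ∪ Dl l := by
  ext y; simp [Dl]

lemma Dl_closed {L : List (Set K)} (h : ∀ P ∈ L, IsClosed P) : IsClosed (Dl L) := by
  induction L with
  | nil => rw [Dl_nil]; exact isClosed_empty
  | cons a l ih =>
    rw [Dl_cons]
    exact (h a (by simp)).union (ih fun P hP => h P (by simp [hP]))

lemma subset_Dl {L : List (Set K)} {P : Set K} (h : P ∈ L) : P ⊆ Dl L :=
  fun y hy => ⟨P, h, hy⟩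

/-- A "good" set: nonempty regular-closed. -/
def Good (C : Set K) : Prop := C.Nonempty ∧ IsClosed C ∧ C ⊆ closure (interior C)

lemma good_univ : Good (univ : Set K) :=
  ⟨univ_nonempty, isClosed_univ, by simp⟩

lemma Good.interior_nonempty {C : Set K} (h : Good C) : (interior C).Nonempty := by
  rcases h.1 with ⟨y, hy⟩
  rw [nonempty_iff_ne_empty]
  intro he
  have := h.2.2 hy
  rw [he, closure_empty] at this
  exact this

lemma cover_exists (C : Set K) (hC : Good C) (ε : ℝ) (hε : 0 < ε) :
    ∃ L : List (Set K), L ≠ [] ∧ (∀ P ∈ L, Good P ∧ P ⊆ C ∧ ∃ u, P ⊆ closedBall u ε) ∧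
      C ⊆ Dl L := by
  classical
  set U := interior C with hU
  have hUopen : IsOpen U := isOpen_interior
  have hcov : C ⊆ ⋃ u ∈ U, ball u ε := by
    intro y hy
    rcases Metric.mem_closure_iff.1 (hC.2.2 hy) ε hε with ⟨u, huU, hd⟩
    exact mem_iUnion₂.2 ⟨u, huU, by simpa [dist_comm] using hd⟩
  rcases hC.2.1.isCompact.elim_finite_subcover_image (fun u _ => isOpen_ball) hcov with
    ⟨s, hsU, hsfin, hscov⟩
  rcases hC.interior_nonempty with ⟨u₀, hu₀⟩
  set mk : K → Set K := fun u => closure (ball u ε ∩ U) with hmk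
  set L : List (Set K) := mk u₀ :: (hsfin.toFinset.toList.map mk) with hL
  have piece_prop : ∀ u : K, u ∈ U → Good (mk u) ∧ mk u ⊆ C ∧ ∃ v, mk u ⊆ closedBall v ε := by
    intro u huU
    have hsub : ball u ε ∩ U ⊆ C := (inter_subset_right).trans interior_subset
    refine ⟨⟨⟨u, subset_closure ⟨mem_ball_self hε, huU⟩⟩, isClosed_closure, ?_⟩, ?_, ⟨u, ?_⟩⟩
    · exact closure_mono (((isOpen_ball.inter hUopen).subset_interior_iff).2 subset_closure)
    · exact closure_minimal hsub hC.2.1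
    · exact closure_minimal ((inter_subset_left).trans ball_subset_closedBall) isClosed_closedBall
  have hmem_prop : ∀ P ∈ L, Good P ∧ P ⊆ C ∧ ∃ u, P ⊆ closedBall u ε := by
    intro P hP
    rw [hL] at hP
    rcases List.mem_cons.1 hP with h | h
    · subst h; exact piece_prop u₀ hu₀
    · rcases List.mem_map.1 h with ⟨u, hu, rfl⟩
      exact piece_prop u (hsU (by simpa using hu))
  refine ⟨L, by simp [hL], hmem_prop, ?_⟩
  have hUsub : U ⊆ Dl L := by
    intro v hv
    rcases mem_iUnion₂.1 (hscov (interior_subset hv)) with ⟨u, hus, hball⟩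
    refine ⟨mk u, ?_, subset_closure ⟨hball, hv⟩⟩
    rw [hL]
    exact List.mem_cons.2 (Or.inr (List.mem_map.2 ⟨u, by simpa using hus, rfl⟩))
  have hclosed : IsClosed (Dl L) := Dl_closed fun P hP => (hmem_prop P hP).1.2.1
  exact fun y hy => ((closure_mono hUsub).trans hclosed.closure_eq.subset) (hC.2.2 hy)

open Classical in
/-- Refinement pieces of a good set at scale `(1/2)^n`, by choice. -/
noncomputable def pieces (C : Set K) (n : ℕ) : List (Set K) :=
  if h : Good C then (cover_exists C h ((1/2)^n) (by positivity)).choose else [univ]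

lemma pieces_spec {C : Set K} (h : Good C) (n : ℕ) :
    pieces C n ≠ [] ∧
      (∀ P ∈ pieces C n, Good P ∧ P ⊆ C ∧ ∃ u, P ⊆ closedBall u ((1/2)^n)) ∧
      C ⊆ Dl (pieces C n) := by
  unfold pieces
  rw [dif_pos h]
  exact (cover_exists C h ((1/2)^n) (by positivity)).choose_spec

/-- One step of the scheme. -/
noncomputable def step (L : List (Set K)) (b : Bool) (n : ℕ) : List (Set K) :=
  match L with
  | [] => []
  | [P] => pieces P n
  | a :: rest => if b then rest else [a]

/-- The scheme: a list of sets attached to each node `(x, n)`,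
depending only on the first `n` values of `x`. -/
noncomputable def node (x : ℕ → Bool) : ℕ → List (Set K)
  | 0 => [Set.univ]
  | n + 1 => step (node x n) (x n) n

lemma node_ne_nil_good (x : ℕ → Bool) (n : ℕ) :
    node (K := K) x n ≠ [] ∧ ∀ P ∈ node (K := K) x n, Good P := by
  induction n with
  | zero =>
    constructor
    · simp [node]
    · intro P hP; simp [node] at hP; subst hP; exact good_univ
  | succ n ih =>
    obtain ⟨hne, hgood⟩ := ih
    show step (node x n) (x n) n ≠ [] ∧ ∀ P ∈ step (node x n) (x n) n, Good P
    match hL : node (K := K) x n with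
    | [] => exact absurd hL hne
    | [P] =>
      have hP : Good P := hgood P (by rw [hL]; simp)
      show pieces P n ≠ [] ∧ ∀ Q ∈ pieces P n, Good Q
      exact ⟨(pieces_spec hP n).1, fun Q hQ => ((pieces_spec hP n).2.1 Q hQ).1⟩
    | a :: b :: rest =>
      show (if x n then b :: rest else [a]) ≠ [] ∧
        ∀ P ∈ (if x n then b :: rest else [a]), Good P
      cases x n with
      | false =>
        simp only [Bool.false_eq_true, if_false]
        refine ⟨by simp, fun P hP => ?_⟩
        simp only [List.mem_singleton] at hP
        subst hP
        exact hgood P (by rw [hL]; simp)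
      | true =>
        simp only [if_true]
        exact ⟨by simp, fun P hP => hgood P (by rw [hL]; exact List.mem_cons_of_mem a hP)⟩

lemma step_subset {L : List (Set K)} (hgood : ∀ P ∈ L, Good P) (b : Bool) (n : ℕ) :
    ∀ P' ∈ step L b n, ∃ P ∈ L, P' ⊆ P := by
  intro P' hP'
  match L, hP' with
  | [P], hP' =>
    exact ⟨P, by simp, (((pieces_spec (hgood P (by simp)) n).2.1 P' hP').2.1)⟩
  | a :: c :: rest, hP' =>
    cases b with
    | false =>
      simp only [step, Bool.false_eq_true, if_false, List.mem_singleton] at hP'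
      exact ⟨P', by simp [hP'], by subst hP'; rfl⟩
    | true =>
      simp only [step, if_true] at hP'
      exact ⟨P', List.mem_cons_of_mem a hP', by rfl⟩

lemma step_cover {L : List (Set K)} (hne : L ≠ []) (hgood : ∀ P ∈ L, Good P) (n : ℕ) :
    ∀ y ∈ Dl L, ∃ b, y ∈ Dl (step L b n) := by
  intro y hy
  match L, hy with
  | [P], hy =>
    refine ⟨true, ?_⟩
    have hyP : y ∈ P := by
      rcases hy with ⟨Q, hQ, hyQ⟩; simp at hQ; subst hQ; exact hyQ
    exact (pieces_spec (hgood P (by simp)) n).2.2 hyP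
  | a :: c :: rest, hy =>
    rcases hy with ⟨Q, hQ, hyQ⟩
    rcases List.mem_cons.1 hQ with h | h
    · exact ⟨false, ⟨Q, by simp [step, h], hyQ⟩⟩
    · exact ⟨true, ⟨Q, by simpa [step] using h, hyQ⟩⟩

lemma node_eq_of_cylinder {x y : ℕ → Bool} {n : ℕ} (h : y ∈ PiNat.cylinder x n) :
    node (K := K) y n = node (K := K) x n := by
  induction n with
  | zero => rfl
  | succ n ih =>
    have h1 : y ∈ PiNat.cylinder x n := PiNat.cylinder_anti x (Nat.le_succ n) h
    show step (node y n) (y n) n = step (node x n) (x n) n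
    rw [ih h1, h n (Nat.lt_succ_self n)]

lemma node_succ_subset (x : ℕ → Bool) (n : ℕ) :
    Dl (node (K := K) x (n+1)) ⊆ Dl (node (K := K) x n) := by
  rintro y ⟨P', hP', hyP'⟩
  rcases step_subset (node_ne_nil_good x n).2 (x n) n P' hP' with ⟨P, hP, hsub⟩
  exact ⟨P, hP, hsub hyP'⟩

lemma node_antitone (x : ℕ → Bool) : Antitone (fun n => Dl (node (K := K) x n)) :=
  antitone_nat_of_succ_le (node_succ_subset x)

lemma node_nonempty (x : ℕ → Bool) (n : ℕ) : (Dl (node (K := K) x n)).Nonempty := by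
  obtain ⟨hne, hgood⟩ := node_ne_nil_good (K := K) x n
  match hL : node (K := K) x n with
  | [] => exact absurd hL hne
  | P :: rest =>
    rcases (hgood P (by rw [hL] at hgood ⊢ <;> simp)).1 with ⟨y, hy⟩
    exact ⟨y, P, by simp [hL], hy⟩

lemma node_closed (x : ℕ → Bool) (n : ℕ) : IsClosed (Dl (node (K := K) x n)) :=
  Dl_closed fun P hP => ((node_ne_nil_good x n).2 P hP).2.1

lemma node_inter_nonempty (x : ℕ → Bool) :
    (⋂ n, Dl (node (K := K) x n)).Nonempty := by
  apply IsCompact.nonempty_iInter_of_sequence_nonempty_isCompact_isClosed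
  · exact node_succ_subset x
  · exact node_nonempty x
  · exact (node_closed x 0).isCompact
  · exact node_closed x

/-- The map `2^ℕ → K` given by the scheme. -/
noncomputable def psi (x : ℕ → Bool) : K := (node_inter_nonempty x).choose

lemma psi_mem (x : ℕ → Bool) (n : ℕ) : psi x ∈ Dl (node (K := K) x n) :=
  mem_iInter.1 (node_inter_nonempty x).choose_spec n

lemma len_one_exists_aux : ∀ k : ℕ, ∀ (x : ℕ → Bool) (n : ℕ),
    (node (K := K) x n).length ≤ k + 1 → ∃ m, n ≤ m ∧ (node (K := K) x m).length = 1 := by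
  intro k
  induction k with
  | zero =>
    intro x n hlen
    refine ⟨n, le_refl n, ?_⟩
    have h1 : 0 < (node (K := K) x n).length :=
      List.length_pos_iff.2 (node_ne_nil_good x n).1
    omega
  | succ k ih =>
    intro x n hlen
    match hL : node (K := K) x n with
    | [] => exact absurd hL (node_ne_nil_good x n).1
    | [P] => exact ⟨n, le_refl n, by rw [hL] <;> rfl⟩
    | a :: c :: rest =>
      have hstep : node (K := K) x (n+1) = if x n then c :: rest else [a] := by
        show step (node x n) (x n) n = _
        rw [hL]; rfl
      cases hb : x n with
      | false =>
        refine ⟨n + 1, by omega, ?_⟩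
        rw [hstep, hb]; rfl
      | true =>
        have hlen' : (node (K := K) x (n+1)).length ≤ k + 1 := by
          rw [hstep, hb, if_pos rfl]
          rw [hL] at hlen
          simpa using Nat.le_of_succ_le_succ (by simpa using hlen)
        rcases ih x (n+1) hlen' with ⟨m, hm, h1⟩
        exact ⟨m, by omega, h1⟩

lemma len_one_exists (x : ℕ → Bool) (n : ℕ) :
    ∃ m, n ≤ m ∧ (node (K := K) x m).length = 1 :=
  len_one_exists_aux (node (K := K) x n).length x n (by omega)

lemma node_small {x : ℕ → Bool} {m : ℕ} (h : (node (K := K) x m).length = 1) :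
    ∀ P ∈ node (K := K) x (m+1), ∃ u, P ⊆ closedBall u ((1/2)^m) := by
  rcases List.length_eq_one_iff.1 h with ⟨P0, hP0⟩
  have hgood : Good P0 := (node_ne_nil_good x m).2 P0 (by rw [hP0]; simp)
  have hstep : node (K := K) x (m+1) = pieces P0 m := by
    show step (node x m) (x m) m = _
    rw [hP0] <;> rfl
  rw [hstep]
  exact fun P hP => ((pieces_spec hgood m).2.1 P hP).2.2

lemma node_elements_subset (x : ℕ → Bool) (n : ℕ) :
    ∀ k, ∀ P' ∈ node (K := K) x (n + k), ∃ P ∈ node (K := K) x n, P' ⊆ P := by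
  intro k
  induction k with
  | zero => exact fun P' hP' => ⟨P', hP', by rfl⟩
  | succ k ih =>
    intro P' hP'
    have : P' ∈ step (node (K := K) x (n+k)) (x (n+k)) (n+k) := hP'
    rcases step_subset (node_ne_nil_good x (n+k)).2 (x (n+k)) (n+k) P' this with ⟨Q, hQ, hsub⟩
    rcases ih Q hQ with ⟨P, hP, hsub'⟩
    exact ⟨P, hP, hsub.trans hsub'⟩

lemma branch_small (x : ℕ → Bool) {ε : ℝ} (hε : 0 < ε) :
    ∃ n u, Dl (node (K := K) x n) ⊆ closedBall u ε := by
  obtain ⟨j, hj⟩ : ∃ j : ℕ, (1/2 : ℝ) ^ j < ε :=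
    exists_pow_lt_of_lt_one hε (by norm_num)
  rcases len_one_exists (K := K) x j with ⟨m₁, hm₁j, hm₁⟩
  have hsmall := node_small (K := K) hm₁
  rcases len_one_exists (K := K) x (m₁ + 1) with ⟨m₂, hm₂, hm₂len⟩
  rcases List.length_eq_one_iff.1 hm₂len with ⟨P', hP'⟩
  obtain ⟨k, rfl⟩ : ∃ k, m₂ = (m₁ + 1) + k := ⟨m₂ - (m₁+1), by omega⟩
  rcases node_elements_subset (K := K) x (m₁+1) k P' (by rw [hP']; simp) with ⟨P, hP, hsub⟩
  rcases hsmall P hP with ⟨u, hu⟩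
  refine ⟨(m₁ + 1) + k, u, ?_⟩
  intro y hy
  have hyP' : y ∈ P' := by
    rcases hy with ⟨Q, hQ, hyQ⟩
    rw [hP'] at hQ
    simp at hQ
    subst hQ
    exact hyQ
  have h12 : (1/2 : ℝ) ^ m₁ ≤ (1/2 : ℝ) ^ j :=
    pow_le_pow_of_le_one (by norm_num) (by norm_num) hm₁j
  exact closedBall_subset_closedBall (le_of_lt (lt_of_le_of_lt h12 hj)) (hu (hsub hyP'))

lemma psi_continuous : Continuous (psi : (ℕ → Bool) → K) := by
  rw [continuous_iff_continuousAt]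
  intro x
  rw [ContinuousAt, Metric.tendsto_nhds]
  intro ε hε
  rcases branch_small (K := K) x (show (0:ℝ) < ε/3 by linarith) with ⟨n, u, hsub⟩
  have hcyl : PiNat.cylinder x n ∈ nhds x :=
    (PiNat.isOpen_cylinder (fun _ : ℕ => Bool) x n).mem_nhds (PiNat.self_mem_cylinder x n)
  filter_upwards [hcyl] with y hy
  have h1 : psi (K := K) y ∈ Dl (node (K := K) x n) := by
    rw [← node_eq_of_cylinder hy]; exact psi_mem y n
  have h2 : psi (K := K) x ∈ Dl (node (K := K) x n) := psi_mem x n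
  have d1 : dist (psi (K := K) y) u ≤ ε/3 := mem_closedBall.1 (hsub h1)
  have d2 : dist (psi (K := K) x) u ≤ ε/3 := mem_closedBall.1 (hsub h2)
  calc dist (psi (K := K) y) (psi (K := K) x)
      ≤ dist (psi (K := K) y) u + dist (psi (K := K) x) u := dist_triangle_right _ _ _
    _ < ε := by linarith

open Classical in
/-- Choose the next bit so that `y` stays in the scheme. -/
noncomputable def nextSeq (y : K) (w : ℕ → Bool) (m : ℕ) : ℕ → Bool :=
  Function.update w m
    (if h : ∃ b, y ∈ Dl (node (K := K) (Function.update w m b) (m+1)) then h.choose else true)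

lemma node_update_eq (w : ℕ → Bool) (m : ℕ) (b : Bool) :
    node (K := K) (Function.update w m b) m = node (K := K) w m :=
  node_eq_of_cylinder (by
    intro i hi
    exact Function.update_of_ne (by omega) _ _)

lemma nextSeq_spec {y : K} {w : ℕ → Bool} {m : ℕ} (hy : y ∈ Dl (node (K := K) w m)) :
    y ∈ Dl (node (K := K) (nextSeq (K := K) y w m) (m+1)) ∧
      ∀ i, i ≠ m → nextSeq (K := K) y w m i = w i := by
  have hex : ∃ b, y ∈ Dl (node (K := K) (Function.update w m b) (m+1)) := by
    rcases step_cover (node_ne_nil_good w m).1 (node_ne_nil_good w m).2 m y hy with ⟨b, hb⟩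
    refine ⟨b, ?_⟩
    show y ∈ Dl (step (node (Function.update w m b) m) (Function.update w m b m) m)
    rw [node_update_eq, Function.update_self]
    exact hb
  constructor
  · have hns : nextSeq (K := K) y w m = Function.update w m hex.choose := by
      unfold nextSeq
      rw [dif_pos hex]
    rw [hns]
    exact hex.choose_spec
  · intro i hi
    exact Function.update_of_ne hi _ _

/-- Iterated bit choice. -/
noncomputable def seqF (y : K) (x : ℕ → Bool) (n : ℕ) : ℕ → (ℕ → Bool)
  | 0 => x
  | k + 1 => nextSeq (K := K) y (seqF y x n k) (n + k)

lemma reach (x : ℕ → Bool) (n : ℕ) (y : K) (hy : y ∈ Dl (node (K := K) x n)) :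
    ∃ z ∈ PiNat.cylinder x n, psi (K := K) z = y := by
  set F := seqF (K := K) y x n with hF
  have hFmem : ∀ k, y ∈ Dl (node (K := K) (F k) (n + k)) := by
    intro k
    induction k with
    | zero => exact hy
    | succ k ih =>
      have := (nextSeq_spec (K := K) ih).1
      rw [Nat.add_succ]
      exact this
  have hFagree : ∀ k k', k ≤ k' → ∀ i, i < n + k → F k' i = F k i := by
    intro k k' hkk'
    induction k' with
    | zero =>
      obtain rfl : k = 0 := Nat.le_zero.1 hkk'
      exact fun i _ => rfl
    | succ k' ih =>
      rcases Nat.lt_or_ge k (k' + 1) with h | h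
      · intro i hi
        have hik : i ≠ n + k' := by omega
        have h1 : F (k' + 1) i = F k' i := (nextSeq_spec (K := K) (hFmem k')).2 i hik
        rw [h1]
        exact ih (by omega) i hi
      · obtain rfl : k = k' + 1 := by omega
        exact fun i _ => rfl
  set z : ℕ → Bool := fun i => F (i + 1) i with hz
  have hzcyl : ∀ k, z ∈ PiNat.cylinder (F k) (n + k) := by
    intro k i hi
    show F (i + 1) i = F k i
    rcases Nat.le_total (i + 1) k with h | h
    · exact (hFagree (i+1) k h i (by omega)).symm
    · exact hFagree k (i+1) h i hi
  have hzmem : ∀ m, y ∈ Dl (node (K := K) z m) := by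
    intro m
    have h1 : y ∈ Dl (node (K := K) z (n + m)) := by
      rw [node_eq_of_cylinder (hzcyl m)]
      exact hFmem m
    exact node_antitone z (by omega) h1
  have hpsiz : ∀ m, psi (K := K) z ∈ Dl (node (K := K) z m) := psi_mem z
  have heq : psi (K := K) z = y := by
    apply eq_of_forall_dist_le
    intro ε hε
    rcases branch_small (K := K) z (show (0:ℝ) < ε/2 by linarith) with ⟨m, u, hsub⟩
    have d1 : dist (psi (K := K) z) u ≤ ε/2 := mem_closedBall.1 (hsub (hpsiz m))
    have d2 : dist y u ≤ ε/2 := mem_closedBall.1 (hsub (hzmem m))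
    calc dist (psi (K := K) z) y ≤ dist (psi (K := K) z) u + dist y u := dist_triangle_right _ _ _
      _ ≤ ε := by linarith
  refine ⟨z, ?_, heq⟩
  intro i hi
  show F (i + 1) i = x i
  have := hFagree 0 (i + 1) (by omega) i (by omega)
  simpa [hF, seqF] using this

lemma dl_subset_image (x : ℕ → Bool) (n : ℕ) :
    Dl (node (K := K) x n) ⊆ psi (K := K) '' PiNat.cylinder x n := by
  intro y hy
  rcases reach x n y hy with ⟨z, hz, hzy⟩
  exact ⟨z, hz, hzy⟩

lemma psi_preimage_nowhereDense {t : Set K} (ht : IsNowhereDense t) :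
    IsNowhereDense (psi (K := K) ⁻¹' t) := by
  have hsub : closure (psi (K := K) ⁻¹' t) ⊆ psi (K := K) ⁻¹' closure t :=
    psi_continuous.closure_preimage_subset t
  rw [IsNowhereDense]
  rw [← subset_empty_iff]
  intro q hq
  have hq' : q ∈ interior (psi (K := K) ⁻¹' closure t) :=
    interior_mono hsub hq
  rcases (PiNat.isTopologicalBasis_cylinders (fun _ : ℕ => Bool)).exists_subset_of_mem_open hq'
      isOpen_interior with ⟨v, ⟨x, n, rfl⟩, hqv, hvsub⟩
  have himg : Dl (node (K := K) x n) ⊆ closure t := by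
    refine (dl_subset_image x n).trans ?_
    rintro y ⟨z, hz, rfl⟩
    exact (interior_subset : interior (psi (K := K) ⁻¹' closure t) ⊆ _) (hvsub hz)
  obtain ⟨hne, hgood⟩ := node_ne_nil_good (K := K) x n
  match hL : node (K := K) x n with
  | [] => exact absurd hL hne
  | P :: rest =>
    have hPgood : Good P := by rw [hL] at hgood; exact hgood P (by simp)
    rcases hPgood.interior_nonempty with ⟨w, hw⟩
    have hwk : w ∈ interior (closure t) := by
      apply interior_maximal ?_ isOpen_interior hw
      refine (interior_subset).trans ?_
      refine (subset_Dl (L := node (K := K) x n) ?_).trans himg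
      rw [hL]; simp
    rw [ht] at hwk
    exact hwk

lemma psi_preimage_meagre {M : Set K} (hM : IsMeagre M) :
    IsMeagre (psi (K := K) ⁻¹' M) := by
  rw [isMeagre_iff_countable_union_isNowhereDense] at hM ⊢
  rcases hM with ⟨S, hnwd, hcount, hsub⟩
  refine ⟨(fun t => psi (K := K) ⁻¹' t) '' S, ?_, hcount.image _, ?_⟩
  · rintro t' ⟨t, ht, rfl⟩
    exact psi_preimage_nowhereDense (hnwd t ht)
  · intro q hq
    rcases hsub hq with ⟨t, htS, hqt⟩
    exact ⟨psi (K := K) ⁻¹' t, ⟨t, htS, rfl⟩, hqt⟩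

end HaarMeagerAux

open MeasureTheory
/-- `A` is Haar meager: there are a Borel set `B ⊇ A`, a nonempty compact metric space `K`
and a continuous `f : K → G` such that `f⁻¹(g·B·h)` is meager in `K` for all `g, h`. -/
def IsHaarMeager {G : Type} [Group G] [TopologicalSpace G] (A : Set G) : Prop :=
  ∃ B : Set G, MeasurableSet[borel G] B ∧ A ⊆ B ∧
    ∃ (K : Type) (_ : MetricSpace K) (_ : CompactSpace K) (_ : Nonempty K) (f : K → G),
      Continuous f ∧ ∀ g h : G, IsMeagre (f ⁻¹' ((fun b => g * b * h) '' B))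

theorem haarMeager_iff_cantor_witness {G : Type} [Group G] [TopologicalSpace G]
    [IsTopologicalGroup G] [PolishSpace G] (A : Set G) :
    IsHaarMeager A ↔
      ∃ B : Set G, MeasurableSet[borel G] B ∧ A ⊆ B ∧
        ∃ f : (ℕ → Bool) → G, Continuous f ∧
          ∀ g h : G, IsMeagre (f ⁻¹' ((fun b => g * b * h) '' B)) := by
  constructor
  · rintro ⟨B, hB, hAB, K, _, _, _, f, hf, hmeag⟩
    refine ⟨B, hB, hAB, f ∘ HaarMeagerAux.psi, hf.comp HaarMeagerAux.psi_continuous,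
      fun g h => ?_⟩
    have : (f ∘ HaarMeagerAux.psi) ⁻¹' ((fun b => g * b * h) '' B) =
        HaarMeagerAux.psi ⁻¹' (f ⁻¹' ((fun b => g * b * h) '' B)) := rfl
    rw [this]
    exact HaarMeagerAux.psi_preimage_meagre (hmeag g h)
  · rintro ⟨B, hB, hAB, f, hf, hmeag⟩
    exact ⟨B, hB, hAB, ℕ → Bool, TopologicalSpace.metrizableSpaceMetric _,
      inferInstanceAs (CompactSpace (ℕ → Bool)), inferInstanceAs (Nonempty (ℕ → Bool)),
      f, hf, hmeag⟩
end

section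
/- Let G be a Polish group. Then for every Polish space Z and every Borel set A ⊆ Z × C(2^ℕ, G) × G, the set {(z, f) ∈ Z × C(2^ℕ, G) : f⁻¹(A_{z,f}) is meager in 2^ℕ} is a Borel subset of Z × C(2^ℕ, G), where A_{z,f} = {g ∈ G : (z, f, g) ∈ A}. (That is, the map assigning to f ∈ C(2^ℕ, G) the collection {B ⊆ G : f⁻¹(B) is meager in 2^ℕ} is Borel on Borel.) -/
open MeasureTheory Topology TopologicalSpace Set Filter

section KechrisAux

variable {Y : Type*} [TopologicalSpace Y]

private lemma my_isMeagre_union {s t : Set Y} (hs : IsMeagre s) (ht : IsMeagre t) :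
    IsMeagre (s ∪ t) := by
  rw [IsMeagre, Set.compl_union]; exact Filter.inter_mem hs ht

private lemma my_open_eq_empty_of_isMeagre [BaireSpace Y] {s : Set Y} (ho : IsOpen s)
    (hm : IsMeagre s) : s = ∅ := by
  by_contra h
  obtain ⟨y, hy1, hy2⟩ := (dense_of_mem_residual hm).inter_open_nonempty s ho
    (Set.nonempty_iff_ne_empty.mpr h)
  exact hy2 hy1

/-- Baire-category criterion for being meager inside an open set, for sets with the
Baire property, in terms of a countable basis. -/
private lemma my_isMeagre_inter_iff [BaireSpace Y] [SecondCountableTopology Y]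
    {S V : Set Y} (hS : BaireMeasurableSet S) (hV : IsOpen V) :
    IsMeagre (V ∩ S) ↔
      ∀ W ∈ countableBasis Y, W ⊆ V → W.Nonempty → ¬ IsMeagre (W \ S) := by
  constructor
  · intro h W hW hWV hWne hmeag
    have hWm : IsMeagre W := by
      refine (my_isMeagre_union h hmeag).mono (fun y hy => ?_)
      by_cases hyS : y ∈ S
      · exact Or.inl ⟨hWV hy, hyS⟩
      · exact Or.inr ⟨hy, hyS⟩
    exact hWne.ne_empty
      (my_open_eq_empty_of_isMeagre ((isBasis_countableBasis Y).isOpen hW) hWm)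
  · intro h
    obtain ⟨U, hUo, hSU⟩ := hS.residualEq_isOpen
    have hE : {y : Y | y ∈ S ↔ y ∈ U} ∈ residual Y := by
      filter_upwards [hSU] with y hy
      exact iff_of_eq hy
    have hM : IsMeagre {y : Y | ¬ (y ∈ S ↔ y ∈ U)} :=
      Filter.mem_of_superset hE (fun y hy h2 => h2 hy)
    by_cases hVU : (V ∩ U).Nonempty
    · obtain ⟨y, hyV, hyU⟩ := hVU
      obtain ⟨W, hWb, hyW, hWsub⟩ :=
        (isBasis_countableBasis Y).exists_subset_of_mem_open (⟨hyV, hyU⟩ : y ∈ V ∩ U)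
          (hV.inter hUo)
      have hWS : IsMeagre (W \ S) := by
        refine hM.mono ?_
        rintro z ⟨hzW, hzS⟩ hiff
        exact hzS (hiff.mpr (hWsub hzW).2)
      exact absurd hWS (h W hWb (fun z hz => (hWsub hz).1) ⟨y, hyW⟩)
    · refine hM.mono ?_
      rintro y ⟨hyV, hyS⟩ hiff
      exact hVU ⟨y, hyV, hiff.mp hyS⟩

variable {X : Type*} [TopologicalSpace X]

private lemma my_borel_section {B : Set (X × Y)} (hB : MeasurableSet[borel (X × Y)] B)
    (x : X) : MeasurableSet[borel Y] (Prod.mk x ⁻¹' B) := by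
  letI : MeasurableSpace (X × Y) := borel _
  haveI : BorelSpace (X × Y) := ⟨rfl⟩
  letI : MeasurableSpace Y := borel Y
  haveI : BorelSpace Y := ⟨rfl⟩
  exact (Continuous.prodMk_right x).measurable hB

private lemma my_open_slice {B : Set (X × Y)} (hB : IsOpen B) (W : Set Y) :
    IsOpen {x : X | (W ∩ Prod.mk x ⁻¹' B).Nonempty} := by
  have heq : {x : X | (W ∩ Prod.mk x ⁻¹' B).Nonempty}
      = ⋃ y ∈ W, {x : X | (x, y) ∈ B} := by
    ext x
    simp only [Set.mem_setOf_eq, Set.mem_iUnion]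
    constructor
    · rintro ⟨y, hyW, hyB⟩; exact ⟨y, hyW, hyB⟩
    · rintro ⟨y, hyW, hyB⟩; exact ⟨y, hyW, hyB⟩
  rw [heq]
  exact isOpen_biUnion fun y _ =>
    hB.preimage (continuous_id.prodMk continuous_const)

/-- Kechris 16.1 style: the set of `x` whose section of a Borel set is meager is Borel. -/
theorem my_measurableSet_isMeagre_section [SecondCountableTopology Y] [BaireSpace Y]
    {B : Set (X × Y)} (hB : MeasurableSet[borel (X × Y)] B) :
    MeasurableSet[borel X] {x : X | IsMeagre (Prod.mk x ⁻¹' B)} := by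
  letI : MeasurableSpace (X × Y) := borel _
  haveI : BorelSpace (X × Y) := ⟨rfl⟩
  have key : ∀ ⦃t : Set (X × Y)⦄, MeasurableSet t → ∀ V : Set Y, IsOpen V →
      MeasurableSet[borel X] {x : X | IsMeagre (V ∩ Prod.mk x ⁻¹' t)} := by
    apply MeasurableSet.induction_on_open
      (C := fun t _ => ∀ V : Set Y, IsOpen V →
        MeasurableSet[borel X] {x : X | IsMeagre (V ∩ Prod.mk x ⁻¹' t)})
    · intro U hU V hV
      have heq : {x : X | IsMeagre (V ∩ Prod.mk x ⁻¹' U)}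
          = {x : X | (V ∩ Prod.mk x ⁻¹' U).Nonempty}ᶜ := by
        ext x
        simp only [Set.mem_setOf_eq, Set.mem_compl_iff]
        constructor
        · intro h hne
          exact hne.ne_empty (my_open_eq_empty_of_isMeagre
            (hV.inter (hU.preimage (Continuous.prodMk_right x))) h)
        · intro h
          rw [Set.not_nonempty_iff_eq_empty.mp h]
          exact IsMeagre.empty
      rw [heq]
      exact (MeasurableSpace.measurableSet_generateFrom (my_open_slice hU V)).compl
    · intro t ht iht V hV
      have heq : {x : X | IsMeagre (V ∩ Prod.mk x ⁻¹' tᶜ)}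
          = ⋂ W ∈ {W | W ∈ countableBasis Y ∧ W ⊆ V ∧ W.Nonempty},
              {x : X | IsMeagre (W ∩ Prod.mk x ⁻¹' t)}ᶜ := by
        ext x
        have hBP : BaireMeasurableSet ((Prod.mk x ⁻¹' t) : Set Y)ᶜ := by
          borelize Y
          exact (MeasurableSet.baireMeasurableSet (my_borel_section ht x)).compl
        have hcrit := my_isMeagre_inter_iff (S := (Prod.mk x ⁻¹' t)ᶜ) hBP hV
        simp only [Set.mem_setOf_eq, Set.mem_iInter, Set.mem_compl_iff,
          Set.preimage_compl, Set.diff_compl] at hcrit ⊢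
        rw [hcrit]
        constructor
        · intro h W hW
          exact h W hW.1 hW.2.1 hW.2.2
        · intro h W hWb hWV hWne
          exact h W ⟨hWb, hWV, hWne⟩
      rw [heq]
      refine MeasurableSet.biInter
        ((countable_countableBasis Y).mono (fun W hW => hW.1)) (fun W hW => ?_)
      exact (iht W ((isBasis_countableBasis Y).isOpen hW.1)).compl
    · intro f _ _ ihf V hV
      have heq : {x : X | IsMeagre (V ∩ Prod.mk x ⁻¹' ⋃ i, f i)}
          = ⋂ i, {x : X | IsMeagre (V ∩ Prod.mk x ⁻¹' f i)} := by
        ext x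
        simp only [Set.mem_setOf_eq, Set.mem_iInter, Set.preimage_iUnion,
          Set.inter_iUnion]
        exact ⟨fun h i => h.mono (Set.subset_iUnion (fun i => V ∩ Prod.mk x ⁻¹' f i) i), isMeagre_iUnion⟩
      rw [heq]
      exact MeasurableSet.iInter fun i => ihf i V hV
  have := key hB Set.univ isOpen_univ
  simpa only [Set.univ_inter] using this

end KechrisAux

/-- The map `f ↦ {B ⊆ G : f⁻¹(B) is meager in 2^ℕ}` is Borel on Borel: for every Polish
space `Z` and Borel `A ⊆ Z × C(2^ℕ, G) × G`, the set of pairs `(z, f)` with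
`f⁻¹(A_{z,f})` meager in `2^ℕ` is Borel. -/
theorem borel_meagerSection {G : Type} [Group G] [TopologicalSpace G]
    [IsTopologicalGroup G] [PolishSpace G] (Z : Type) [TopologicalSpace Z] [PolishSpace Z]
    (A : Set (Z × C(ℕ → Bool, G) × G))
    (hA : MeasurableSet[borel (Z × C(ℕ → Bool, G) × G)] A) :
    MeasurableSet[borel (Z × C(ℕ → Bool, G))]
      {p : Z × C(ℕ → Bool, G) | IsMeagre (⇑p.2 ⁻¹' {g : G | (p.1, p.2, g) ∈ A})} := by
  haveI : BaireSpace (ℕ → Bool) := by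
    letI := upgradeIsCompletelyMetrizable (ℕ → Bool)
    infer_instance
  set φ : (Z × C(ℕ → Bool, G)) × (ℕ → Bool) → Z × C(ℕ → Bool, G) × G :=
    fun p => (p.1.1, p.1.2, p.1.2 p.2) with hφ
  have hφc : Continuous φ := by
    refine continuous_fst.fst.prodMk (continuous_fst.snd.prodMk ?_)
    exact continuous_eval.comp (continuous_fst.snd.prodMk continuous_snd)
  have hB : MeasurableSet[borel ((Z × C(ℕ → Bool, G)) × (ℕ → Bool))] (φ ⁻¹' A) := by
    letI : MeasurableSpace ((Z × C(ℕ → Bool, G)) × (ℕ → Bool)) := borel _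
    haveI : BorelSpace ((Z × C(ℕ → Bool, G)) × (ℕ → Bool)) := ⟨rfl⟩
    letI : MeasurableSpace (Z × C(ℕ → Bool, G) × G) := borel _
    haveI : BorelSpace (Z × C(ℕ → Bool, G) × G) := ⟨rfl⟩
    exact hφc.measurable hA
  exact my_measurableSet_isMeagre_section hB
end

section
/- Let G be a Polish group. Then there exists a partial function φ from C(2^ℕ, G) × 2^ℕ to G whose graph, viewed as a subset of C(2^ℕ, G) × 2^ℕ × G, is Borel, and such that for every f ∈ C(2^ℕ, G): (i) for every x ∈ 2^ℕ, if (f, x) is in the domain of φ then φ(f, x) ∈ f(2^ℕ); and (ii) for every set S ⊆ 2^ℕ × G that is a countable union of closed sets (i.e., F_σ) and contains the graph of φ_f := φ(f, ·), there exists x ∈ 2^ℕ such that f⁻¹(S_x) is non-meager in 2^ℕ, where S_x = {g ∈ G : (x, g) ∈ S}. -/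
open MeasureTheory

namespace ExistsBorelPartial

/-- The domain: sequences with infinitely many `true`s on even positions. -/
def D0 : Set (ℕ → Bool) := {v | ∀ m, ∃ k, m ≤ k ∧ v (2 * k) = true}

open scoped Classical in
/-- The selector function: `chi v i` is the bit following the `i`-th even position
carrying `true`. -/
noncomputable def chi (v : ℕ → Bool) (i : ℕ) : Bool :=
  if ∃ m, v (2 * m) = true ∧ Nat.count (fun k => v (2 * k) = true) m = i ∧
      v (2 * m + 1) = true then true else false

lemma count_congr {p q : ℕ → Prop} [DecidablePred p] [DecidablePred q] :
    ∀ {n : ℕ}, (∀ k, k < n → (p k ↔ q k)) → Nat.count p n = Nat.count q n := by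
  intro n
  induction n with
  | zero => intro _; simp
  | succ n ih =>
    intro h
    rw [Nat.count_succ, Nat.count_succ, ih (fun k hk => h k (hk.trans (Nat.lt_succ_self n)))]
    by_cases hp : p n
    · rw [if_pos hp, if_pos ((h n (Nat.lt_succ_self n)).mp hp)]
    · rw [if_neg hp, if_neg (fun hq => hp ((h n (Nat.lt_succ_self n)).mpr hq))]

lemma count_eq_of_not {p : ℕ → Prop} [DecidablePred p] {a b : ℕ} (hab : a ≤ b)
    (h : ∀ k, a ≤ k → k < b → ¬ p k) : Nat.count p b = Nat.count p a := by
  induction b, hab using Nat.le_induction with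
  | base => rfl
  | succ b hab ih =>
    rw [Nat.count_succ, if_neg (h b hab (Nat.lt_succ_self b)), add_zero]
    exact ih (fun k hk hk' => h k hk (hk'.trans (Nat.lt_succ_self b)))

lemma count_eq_of_all {p : ℕ → Prop} [DecidablePred p] {a b : ℕ} (hab : a ≤ b)
    (h : ∀ k, a ≤ k → k < b → p k) : Nat.count p b = Nat.count p a + (b - a) := by
  induction b, hab using Nat.le_induction with
  | base => simp
  | succ b hab ih =>
    rw [Nat.count_succ, if_pos (h b hab (Nat.lt_succ_self b)),
      ih (fun k hk hk' => h k hk (hk'.trans (Nat.lt_succ_self b)))]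
    omega

lemma exists_of_lt_count {p : ℕ → Prop} [DecidablePred p] {c i : ℕ} (h : i < Nat.count p c) :
    ∃ m, m < c ∧ p m ∧ Nat.count p m = i := by
  induction c with
  | zero => simp at h
  | succ c ih =>
    by_cases hic : i < Nat.count p c
    · obtain ⟨m, h1, h2, h3⟩ := ih hic
      exact ⟨m, h1.trans (Nat.lt_succ_self c), h2, h3⟩
    · rw [Nat.count_succ] at h
      by_cases hpc : p c
      · rw [if_pos hpc] at h
        have hi : i = Nat.count p c := by omega
        exact ⟨c, Nat.lt_succ_self c, hpc, hi.symm⟩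
      · rw [if_neg hpc, add_zero] at h
        exact absurd h hic

lemma count_lt_count {p : ℕ → Prop} [DecidablePred p] {a b : ℕ} (hp : p a) (hab : a < b) :
    Nat.count p a < Nat.count p b := by
  have h1 : Nat.count p a < Nat.count p (a + 1) := by
    rw [Nat.count_succ, if_pos hp]; omega
  exact h1.trans_le (Nat.count_monotone p hab)

lemma chi_eq {v : ℕ → Bool} {m i : ℕ} (h1 : v (2 * m) = true)
    (h2 : Nat.count (fun k => v (2 * k) = true) m = i) : chi v i = v (2 * m + 1) := by
  unfold chi
  by_cases hv : v (2 * m + 1) = true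
  · rw [if_pos ⟨m, h1, h2, hv⟩, hv]
  · rw [if_neg ?_]
    · exact ((Bool.not_eq_true _).mp hv).symm
    · rintro ⟨m', h1', h2', h3'⟩
      have hmm : m' = m := by
        by_contra hne
        rcases Nat.lt_or_ge m' m with hlt | hge
        · have := count_lt_count (p := fun k => v (2 * k) = true) h1' hlt; omega
        · have hlt : m < m' := by omega
          have := count_lt_count (p := fun k => v (2 * k) = true) h1 hlt; omega
      exact hv (hmm ▸ h3')

lemma exists_sel_count {v : ℕ → Bool} (hv : v ∈ D0) (i : ℕ) :
    ∃ m, v (2 * m) = true ∧ Nat.count (fun k => v (2 * k) = true) m = i := by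
  induction i with
  | zero =>
    obtain ⟨k, -, hk⟩ := hv 0
    have he : ∃ k, v (2 * k) = true := ⟨k, hk⟩
    refine ⟨Nat.find he, Nat.find_spec he, ?_⟩
    have := count_eq_of_not (p := fun k => v (2 * k) = true) (Nat.zero_le (Nat.find he))
      (fun k _ hk' => Nat.find_min he hk')
    simpa using this
  | succ i ih =>
    obtain ⟨m, hm, hc⟩ := ih
    obtain ⟨k, hk1, hk2⟩ := hv (m + 1)
    have he : ∃ j, v (2 * (m + 1 + j)) = true := ⟨k - (m + 1), by
      have : m + 1 + (k - (m + 1)) = k := by omega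
      rw [this]; exact hk2⟩
    refine ⟨m + 1 + Nat.find he, Nat.find_spec he, ?_⟩
    have h1 : Nat.count (fun k => v (2 * k) = true) (m + 1 + Nat.find he)
        = Nat.count (fun k => v (2 * k) = true) (m + 1) := by
      refine count_eq_of_not (by omega) (fun k' hk' hk'' hpk => ?_)
      have hd : k' = m + 1 + (k' - (m + 1)) := by omega
      have := Nat.find_min he (m := k' - (m + 1)) (by omega)
      rw [hd] at hpk
      exact this hpk
    have h2 : Nat.count (fun k => v (2 * k) = true) (m + 1) = i + 1 := by
      rw [Nat.count_succ, if_pos hm, hc]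
    rw [h1, h2]

/-- Cylinders. -/
def cyl (v : ℕ → Bool) (L : ℕ) : Set (ℕ → Bool) := {y | ∀ n, n < L → y n = v n}

lemma isOpen_cyl (v : ℕ → Bool) (L : ℕ) : IsOpen (cyl v L) := by
  have : cyl v L = ⋂ n ∈ Finset.range L, {y : ℕ → Bool | y n = v n} := by
    ext y; simp [cyl]
  rw [this]
  refine isOpen_biInter_finset fun n _ => ?_
  have : {y : ℕ → Bool | y n = v n} = (fun y : ℕ → Bool => y n) ⁻¹' {b : Bool | b = v n} := rfl
  rw [this]
  exact IsOpen.preimage (continuous_apply n) (isOpen_discrete _)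

lemma exists_cyl_subset {v : ℕ → Bool} {s : Set (ℕ → Bool)} (hs : s ∈ nhds v) :
    ∃ L, cyl v L ⊆ s := by
  rw [nhds_pi, Filter.mem_pi] at hs
  obtain ⟨I, hI, t, ht, hsub⟩ := hs
  obtain ⟨L, hL⟩ := hI.bddAbove
  refine ⟨L + 1, fun y hy => hsub fun i hi => ?_⟩
  have hiL : i ≤ L := hL hi
  have : y i = v i := hy i (by omega)
  rw [this]
  exact mem_of_mem_nhds (ht i)

lemma dense_Um (m : ℕ) : Dense {v : ℕ → Bool | ∃ k, m ≤ k ∧ v (2 * k) = true} := by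
  intro v
  rw [mem_closure_iff]
  intro o ho hvo
  obtain ⟨L, hL⟩ := exists_cyl_subset (ho.mem_nhds hvo)
  refine ⟨fun n => if n = 2 * max m L then true else v n, hL (fun n hn => ?_), ?_⟩
  · have : n ≠ 2 * max m L := by
      have := le_max_right m L; omega
    rw [if_neg this]
  · exact ⟨max m L, le_max_left m L, by simp⟩

lemma not_isMeagre_of_isOpen {U : Set (ℕ → Bool)} (hU : IsOpen U) (hne : U.Nonempty) :
    ¬ IsMeagre U := by
  intro h
  obtain ⟨u, hu⟩ := hne
  have hd : Dense Uᶜ := dense_of_mem_residual h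
  obtain ⟨w, hw1, hw2⟩ := mem_closure_iff.mp (hd u) U hU hu
  exact hw2 hw1

lemma continuousAt_chi {v : ℕ → Bool} (hv : v ∈ D0) : ContinuousAt chi v := by
  rw [continuousAt_pi]
  intro i
  obtain ⟨m, hm, hc⟩ := exists_sel_count hv i
  apply Filter.EventuallyEq.continuousAt (y := chi v i)
  have hcyl : cyl v (2 * m + 2) ∈ nhds v :=
    (isOpen_cyl v (2 * m + 2)).mem_nhds (fun n _ => rfl)
  filter_upwards [hcyl] with u hu
  have h1 : u (2 * m) = true := by rw [hu (2 * m) (by omega)]; exact hm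
  have h2 : Nat.count (fun k => u (2 * k) = true) m = i := by
    rw [count_congr (fun k hk => by rw [hu (2 * k) (by omega)])]
    exact hc
  rw [chi_eq h1 h2, hu (2 * m + 1) (by omega), ← chi_eq hm hc]

lemma main_section {G : Type} [TopologicalSpace G] (f : C(ℕ → Bool, G))
    (F : ℕ → Set ((ℕ → Bool) × G)) (hFcl : ∀ n, IsClosed (F n))
    (hgr : ∀ v ∈ D0, (v, f (chi v)) ∈ ⋃ n, F n) :
    ∃ x : ℕ → Bool, ¬ IsMeagre (⇑f ⁻¹' {g : G | (x, g) ∈ ⋃ n, F n}) := by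
  classical
  set Km : ℕ → Set (ℕ → Bool) :=
    fun n => closure {v | v ∈ D0 ∧ (v, f (chi v)) ∈ F n} with hKmdef
  set Nm : ℕ → Set (ℕ → Bool) :=
    fun m => {v | ∃ k, m ≤ k ∧ v (2 * k) = true}ᶜ with hNmdef
  have hclosed : ∀ i : ℕ ⊕ ℕ, IsClosed (Sum.elim Km Nm i) := by
    rintro (n | m)
    · exact isClosed_closure
    · simp only [Sum.elim_inr, hNmdef]
      refine IsOpen.isClosed_compl ?_
      have he : {v : ℕ → Bool | ∃ k, m ≤ k ∧ v (2 * k) = true}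
          = ⋃ k, ⋃ (_ : m ≤ k), {v : ℕ → Bool | v (2 * k) = true} := by
        ext v; simp
      rw [he]
      refine isOpen_iUnion fun k => isOpen_iUnion fun _ => ?_
      have he2 : {v : ℕ → Bool | v (2 * k) = true}
          = (fun v : ℕ → Bool => v (2 * k)) ⁻¹' {b : Bool | b = true} := rfl
      rw [he2]
      exact IsOpen.preimage (continuous_apply _) (isOpen_discrete _)
  have hcover : ⋃ i, Sum.elim Km Nm i = Set.univ := by
    ext v
    simp only [Set.mem_iUnion, Set.mem_univ, iff_true]
    by_cases hv : v ∈ D0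
    · obtain ⟨n, hn⟩ := Set.mem_iUnion.mp (hgr v hv)
      exact ⟨Sum.inl n, subset_closure ⟨hv, hn⟩⟩
    · simp only [D0, Set.mem_setOf_eq, not_forall] at hv
      obtain ⟨m, hm⟩ := hv
      refine ⟨Sum.inr m, ?_⟩
      simp only [Sum.elim_inr, hNmdef, Set.mem_compl_iff, Set.mem_setOf_eq]
      exact hm
  obtain ⟨i, hi⟩ := nonempty_interior_of_iUnion_of_closed hclosed hcover
  rcases i with n | m
  swap
  · exfalso
    simp only [Sum.elim_inr, hNmdef] at hi
    rw [interior_compl, (dense_Um m).closure_eq, Set.compl_univ] at hi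
    exact hi.ne_empty rfl
  simp only [Sum.elim_inl] at hi
  obtain ⟨v₁, hv₁⟩ := hi
  obtain ⟨c, hL⟩ := exists_cyl_subset (mem_interior_iff_mem_nhds.mp hv₁)
  have hKey : ∀ u, u ∈ D0 → (∀ n', n' < 2 * c → u n' = v₁ n') → (u, f (chi u)) ∈ F n := by
    intro u hu hpre
    have hucl : u ∈ Km n := hL (fun n' hn' => hpre n' (by omega))
    simp only [hKmdef] at hucl
    haveI hne : (nhdsWithin u {v | v ∈ D0 ∧ (v, f (chi v)) ∈ F n}).NeBot :=
      mem_closure_iff_nhdsWithin_neBot.mp hucl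
    have hθ : ContinuousAt (fun v : ℕ → Bool => (v, f (chi v))) u :=
      (continuousAt_id).prodMk ((f.continuous.continuousAt).comp (continuousAt_chi hu))
    refine (hFcl n).mem_of_tendsto (hθ.tendsto.mono_left (nhdsWithin_le_nhds (s := {v | v ∈ D0 ∧ (v, f (chi v)) ∈ F n}))) ?_
    filter_upwards [eventually_mem_nhdsWithin] with z hz using hz.2
  set r := Nat.count (fun k => v₁ (2 * k) = true) c with hrdef
  set xs : ℕ → Bool := fun n' => if n' < 2 * c then v₁ n' else false with hxsdef
  have hsub : cyl (chi v₁) r ⊆ ⇑f ⁻¹' {g : G | (xs, g) ∈ ⋃ n, F n} := by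
    intro y hy
    simp only [Set.mem_preimage, Set.mem_setOf_eq]
    rw [Set.mem_iUnion]
    refine ⟨n, ?_⟩
    set w : ℕ → (ℕ → Bool) := fun j n' =>
      if n' < 2 * c then v₁ n'
      else if n' < 2 * c + 2 * j then false
      else if n' < 2 * c + 4 * j then
        (if (n' - (2 * c + 2 * j)) % 2 = 0 then true
         else y (r + (n' - (2 * c + 2 * j)) / 2))
      else true with hwdef
    have hw1 : ∀ j n', n' < 2 * c → w j n' = v₁ n' := fun j n' h => if_pos h
    have hwD0 : ∀ j, w j ∈ D0 := by
      intro j m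
      refine ⟨max m (c + 2 * j), le_max_left _ _, ?_⟩
      show w j (2 * max m (c + 2 * j)) = true
      have hmx := le_max_right m (c + 2 * j)
      simp only [hwdef]
      rw [if_neg (by omega), if_neg (by omega), if_neg (by omega)]
    have hmem : ∀ j, (w j, f (chi (w j))) ∈ F n := fun j => hKey (w j) (hwD0 j) (hw1 j)
    have ha : ∀ j k, k < c → (w j (2 * k) = true ↔ v₁ (2 * k) = true) := by
      intro j k hk
      rw [hw1 j (2 * k) (by omega)]
    have hd : ∀ j, Nat.count (fun k => w j (2 * k) = true) c = r := by
      intro j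
      rw [count_congr (ha j), hrdef]
    have hb : ∀ j k, c ≤ k → k < c + j → ¬ (w j (2 * k) = true) := by
      intro j k h1 h2
      have : w j (2 * k) = false := by
        simp only [hwdef]
        rw [if_neg (by omega), if_pos (by omega)]
      simp [this]
    have hcc : ∀ j k, c + j ≤ k → k < c + 2 * j → w j (2 * k) = true := by
      intro j k h1 h2
      simp only [hwdef]
      rw [if_neg (by omega), if_neg (by omega), if_pos (by omega), if_pos (by omega)]
    have hchi : ∀ i j, i < r + j → chi (w j) i = y i := by
      intro i j hij
      by_cases hir : i < r
      · have hir' : i < Nat.count (fun k => v₁ (2 * k) = true) c := by rw [← hrdef]; exact hir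
        obtain ⟨m, hmc, hpm, hcm⟩ := exists_of_lt_count hir'
        have h1 : w j (2 * m) = true := by rw [hw1 j (2 * m) (by omega)]; exact hpm
        have h2 : Nat.count (fun k => w j (2 * k) = true) m = i := by
          rw [count_congr (fun k hk => ha j k (by omega))]; exact hcm
        rw [chi_eq h1 h2, hw1 j (2 * m + 1) (by omega)]
        have hyv : y i = chi v₁ i := hy i hir
        rw [hyv, chi_eq hpm hcm]
      · push_neg at hir
        have h1 : w j (2 * (c + j + (i - r))) = true := hcc j _ (by omega) (by omega)
        have h2 : Nat.count (fun k => w j (2 * k) = true) (c + j + (i - r)) = i := by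
          have e1 : Nat.count (fun k => w j (2 * k) = true) (c + j)
              = Nat.count (fun k => w j (2 * k) = true) c :=
            count_eq_of_not (by omega) (hb j)
          have e2 := count_eq_of_all (p := fun k => w j (2 * k) = true) (a := c + j)
            (b := c + j + (i - r)) (by omega) (fun k hk1 hk2 => hcc j k hk1 (by omega))
          rw [e2, e1, hd j]
          omega
        rw [chi_eq h1 h2]
        show w j (2 * (c + j + (i - r)) + 1) = y i
        simp only [hwdef]
        rw [if_neg (by omega), if_neg (by omega), if_pos (by omega), if_neg (by omega)]
        congr 1
        omega
    have htend1 : Filter.Tendsto w Filter.atTop (nhds xs) := by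
      rw [tendsto_pi_nhds]
      intro n'
      refine Filter.Tendsto.congr'
        (Filter.eventually_atTop.mpr ⟨n' + 1, fun j hj => ?_⟩) tendsto_const_nhds
      show xs n' = w j n'
      by_cases hn' : n' < 2 * c
      · rw [hw1 j n' hn']
        simp only [hxsdef]
        rw [if_pos hn']
      · simp only [hxsdef, hwdef]
        rw [if_neg hn', if_neg hn', if_pos (by omega)]
    have htend2 : Filter.Tendsto (fun j => chi (w j)) Filter.atTop (nhds y) := by
      rw [tendsto_pi_nhds]
      intro i
      refine Filter.Tendsto.congr'
        (Filter.eventually_atTop.mpr ⟨i + 1, fun j hj => ?_⟩) tendsto_const_nhds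
      exact (hchi i j (by omega)).symm
    have htend : Filter.Tendsto (fun j => (w j, f (chi (w j)))) Filter.atTop
        (nhds (xs, f y)) :=
      htend1.prodMk_nhds ((f.continuous.tendsto y).comp htend2)
    exact (hFcl n).mem_of_tendsto htend (Filter.Eventually.of_forall hmem)
  refine ⟨xs, fun hMeagre => ?_⟩
  exact not_isMeagre_of_isOpen (isOpen_cyl (chi v₁) r) ⟨chi v₁, fun _ _ => rfl⟩
    (hMeagre.mono hsub)

lemma measurable_graph {G : Type} [TopologicalSpace G] [PolishSpace G] :
    MeasurableSet[borel (C(ℕ → Bool, G) × (ℕ → Bool) × G)]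
      {q : C(ℕ → Bool, G) × (ℕ → Bool) × G |
        q.2.1 ∈ D0 ∧ q.2.2 = q.1 (chi q.2.1)} := by
  classical
  letI : MeasurableSpace (C(ℕ → Bool, G) × (ℕ → Bool) × G) := borel _
  haveI : BorelSpace (C(ℕ → Bool, G) × (ℕ → Bool) × G) := ⟨rfl⟩
  set A : Set (C(ℕ → Bool, G) × (ℕ → Bool) × G) :=
    {q | q.2.1 ∈ D0 ∧ q.2.2 = q.1 (chi q.2.1)} with hAdef
  have hW : ∀ m : ℕ, IsOpen {q : C(ℕ → Bool, G) × (ℕ → Bool) × G |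
      ∃ k, m ≤ k ∧ q.2.1 (2 * k) = true} := by
    intro m
    have he : {q : C(ℕ → Bool, G) × (ℕ → Bool) × G | ∃ k, m ≤ k ∧ q.2.1 (2 * k) = true}
        = ⋃ k, ⋃ (_ : m ≤ k),
          {q : C(ℕ → Bool, G) × (ℕ → Bool) × G | q.2.1 (2 * k) = true} := by
      ext q; simp
    rw [he]
    refine isOpen_iUnion fun k => isOpen_iUnion fun _ => ?_
    have he2 : {q : C(ℕ → Bool, G) × (ℕ → Bool) × G | q.2.1 (2 * k) = true}
        = (fun q : C(ℕ → Bool, G) × (ℕ → Bool) × G => q.2.1 (2 * k)) ⁻¹' {b | b = true} := rfl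
    rw [he2]
    exact IsOpen.preimage ((continuous_apply (2 * k)).comp (continuous_fst.comp continuous_snd))
      (isOpen_discrete _)
  have hAeq : A = (⋂ m : ℕ,
      {q : C(ℕ → Bool, G) × (ℕ → Bool) × G | ∃ k, m ≤ k ∧ q.2.1 (2 * k) = true})
      ∩ closure A := by
    apply Set.Subset.antisymm
    · intro q hq
      exact ⟨Set.mem_iInter.mpr (fun m => hq.1 m), subset_closure hq⟩
    · rintro q ⟨hq1, hq2⟩
      have hqD : q.2.1 ∈ D0 := fun m => Set.mem_iInter.mp hq1 m
      haveI hne : (nhdsWithin q A).NeBot := mem_closure_iff_nhdsWithin_neBot.mp hq2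
      have hproj : Continuous (fun p : C(ℕ → Bool, G) × (ℕ → Bool) × G => p.2.1) :=
        continuous_snd.fst
      have hchi2 : ContinuousAt
          (fun p : C(ℕ → Bool, G) × (ℕ → Bool) × G => chi p.2.1) q := by
        have := ContinuousAt.comp (g := chi) (x := q)
          (f := fun p : C(ℕ → Bool, G) × (ℕ → Bool) × G => p.2.1)
          (continuousAt_chi hqD) hproj.continuousAt
        exact this
      have hθ : ContinuousAt
          (fun p : C(ℕ → Bool, G) × (ℕ → Bool) × G => (p.2.2, p.1 (chi p.2.1))) q := by
        refine ContinuousAt.prodMk (continuous_snd.snd.continuousAt) ?_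
        have h1 : ContinuousAt
            (fun p : C(ℕ → Bool, G) × (ℕ → Bool) × G => (p.1, chi p.2.1)) q :=
          ContinuousAt.prodMk continuous_fst.continuousAt hchi2
        have := ContinuousAt.comp (x := q)
          (g := fun fx : C(ℕ → Bool, G) × (ℕ → Bool) => fx.1 fx.2)
          (f := fun p : C(ℕ → Bool, G) × (ℕ → Bool) × G => (p.1, chi p.2.1))
          (continuous_eval.continuousAt) h1
        exact this
      have hdiag : (q.2.2, q.1 (chi q.2.1)) ∈ {z : G × G | z.1 = z.2} := by
        refine (isClosed_eq continuous_fst continuous_snd).mem_of_tendsto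
          (hθ.tendsto.mono_left (nhdsWithin_le_nhds (s := A))) ?_
        filter_upwards [eventually_mem_nhdsWithin] with p hp using hp.2
      exact ⟨hqD, hdiag⟩
  rw [hAdef] at hAeq ⊢
  rw [hAeq]
  exact (MeasurableSet.iInter (fun m => (hW m).measurableSet)).inter
    isClosed_closure.measurableSet

end ExistsBorelPartial

/-- There is a partial function `φ` (domain `D`, values `φ`) from `C(2^ℕ, G) × 2^ℕ` to `G`
with Borel graph such that (i) its values lie in the range of the first coordinate, and
(ii) any `F_σ` set `S ⊆ 2^ℕ × G` containing the graph of `φ_f` has a section whose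
`f`-preimage is non-meager in `2^ℕ`. -/
theorem exists_borel_partial_function {G : Type} [Group G] [TopologicalSpace G]
    [IsTopologicalGroup G] [PolishSpace G] :
    ∃ (D : Set (C(ℕ → Bool, G) × (ℕ → Bool))) (φ : C(ℕ → Bool, G) × (ℕ → Bool) → G),
      MeasurableSet[borel (C(ℕ → Bool, G) × (ℕ → Bool) × G)]
        {q : C(ℕ → Bool, G) × (ℕ → Bool) × G |
          (q.1, q.2.1) ∈ D ∧ q.2.2 = φ (q.1, q.2.1)} ∧
      (∀ (f : C(ℕ → Bool, G)) (x : ℕ → Bool), (f, x) ∈ D → φ (f, x) ∈ Set.range ⇑f) ∧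
      (∀ (f : C(ℕ → Bool, G)) (S : Set ((ℕ → Bool) × G)),
        (∃ F : ℕ → Set ((ℕ → Bool) × G), (∀ n, IsClosed (F n)) ∧ S = ⋃ n, F n) →
        (∀ x : ℕ → Bool, (f, x) ∈ D → (x, φ (f, x)) ∈ S) →
        ∃ x : ℕ → Bool, ¬ IsMeagre (⇑f ⁻¹' {g : G | (x, g) ∈ S})) := by
  refine ⟨{p | p.2 ∈ ExistsBorelPartial.D0},
    fun p => p.1 (ExistsBorelPartial.chi p.2), ?_, ?_, ?_⟩
  · exact ExistsBorelPartial.measurable_graph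
  · intro f x _
    exact ⟨ExistsBorelPartial.chi x, rfl⟩
  · rintro f S ⟨F, hFcl, rfl⟩ hgr
    exact ExistsBorelPartial.main_section f F hFcl (fun v hv => hgr v hv)
end

section
/- Every compact subset of the symmetric group S∞ (the group of all permutations of ℕ with the Polish topology of pointwise convergence) satisfies the finite translation property (FTP). -/
open MeasureTheory

/-- The Polish topology on `S∞ = Equiv.Perm ℕ`, induced by the embedding
`σ ↦ (σ, σ⁻¹)` into `ℕ^ℕ × ℕ^ℕ` (equivalently, the topology of pointwise convergence). -/
instance : TopologicalSpace (Equiv.Perm ℕ) :=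
  TopologicalSpace.induced
    (fun σ : Equiv.Perm ℕ => (⇑σ, ⇑σ.symm))
    inferInstance

/-- `A` satisfies the finite translation property. -/
def SatisfiesFTP {G : Type} [Group G] [TopologicalSpace G] (A : Set G) : Prop :=
  ∀ U : Set G, IsOpen U → U.Nonempty →
    ∃ M : Set G, M.Finite ∧ M ⊆ U ∧
      ∀ g h : G, ¬ (fun m => g * m * h) '' M ⊆ A

theorem ftp_of_isCompact_perm (K : Set (Equiv.Perm ℕ)) (hK : IsCompact K) :
    SatisfiesFTP K := by
  classical
  intro U hU hUne
  obtain ⟨σ₀, hσ₀⟩ := hUne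
  have hf : Continuous (fun σ : Equiv.Perm ℕ => (⇑σ, ⇑σ.symm)) := continuous_induced_dom
  -- extract a basic neighborhood of σ₀ inside U
  have hUnhds : U ∈ nhds σ₀ := hU.mem_nhds hσ₀
  rw [nhds_induced] at hUnhds
  obtain ⟨V, hV, hVU⟩ := hUnhds
  rw [mem_nhds_prod_iff] at hV
  obtain ⟨V₁, hV₁, V₂, hV₂, hVprod⟩ := hV
  obtain ⟨O₁, hO₁sub, hO₁open, hO₁mem⟩ := mem_nhds_iff.mp hV₁
  obtain ⟨O₂, hO₂sub, hO₂open, hO₂mem⟩ := mem_nhds_iff.mp hV₂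
  obtain ⟨I₁, u₁, hu₁, hu₁sub⟩ := isOpen_pi_iff.mp hO₁open _ hO₁mem
  obtain ⟨I₂, u₂, hu₂, hu₂sub⟩ := isOpen_pi_iff.mp hO₂open _ hO₂mem
  -- membership criterion for U
  have hUcrit : ∀ m : Equiv.Perm ℕ, (∀ i ∈ I₁, m i = σ₀ i) →
      (∀ y ∈ I₂, m.symm y = σ₀.symm y) → m ∈ U := by
    intro m h1 h2
    apply hVU
    have hm1 : ⇑m ∈ V₁ := by
      apply hO₁sub
      apply hu₁sub
      intro i hi
      rw [h1 i hi]
      exact (hu₁ i hi).2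
    have hm2 : ⇑m.symm ∈ V₂ := by
      apply hO₂sub
      apply hu₂sub
      intro i hi
      rw [h2 i hi]
      exact (hu₂ i hi).2
    exact hVprod ⟨hm1, hm2⟩
  -- the finite set of constrained points
  set B : Finset ℕ := I₁ ∪ I₂.image ⇑σ₀.symm with hBdef
  set P : Set ℕ := (↑B : Set ℕ)ᶜ with hPdef
  haveI hPdec : DecidablePred (· ∈ P) := fun x => decidable_of_iff (x ∉ B) (by simp [hPdef])
  haveI hPinf : Infinite ↥P := ((B.finite_toSet).infinite_compl).to_subtype
  haveI : Denumerable ↥P := Nat.Subtype.denumerable P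
  -- a permutation fixing B with all other orbits infinite
  set e₂ : ↥P ≃ ℤ := (Denumerable.eqv ↥P).trans (Denumerable.eqv ℤ).symm with he₂
  set en : Equiv.Perm ↥P := e₂.trans ((Equiv.addRight (1 : ℤ)).trans e₂.symm) with hen_def
  set ρ : Equiv.Perm ℕ := Equiv.Perm.ofSubtype en with hρdef
  have hen : ∀ (j : ℕ) (z : ↥P), (en ^ j) z = e₂.symm (e₂ z + j) := by
    intro j
    induction j with
    | zero => intro z; simp
    | succ n ih =>
      intro z
      rw [pow_succ, Equiv.Perm.mul_apply, ih]
      have : en z = e₂.symm (e₂ z + 1) := rfl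
      rw [this]
      simp only [Equiv.apply_symm_apply]
      congr 1
      push_cast
      ring
  have hρpow : ∀ j : ℕ, ρ ^ j = Equiv.Perm.ofSubtype (en ^ j) := by
    intro j
    rw [hρdef, ← map_pow]
  have hρval : ∀ (j : ℕ) (y : ℕ) (hy : y ∈ P),
      (ρ ^ j) y = ((e₂.symm (e₂ ⟨y, hy⟩ + j) : ↥P) : ℕ) := by
    intro j y hy
    rw [hρpow j, Equiv.Perm.ofSubtype_apply_of_mem _ hy, hen]
  have hfixB : ∀ (j : ℕ) (i : ℕ), i ∈ B → (ρ ^ j) i = i := by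
    intro j i hi
    rw [hρpow j]
    apply Equiv.Perm.ofSubtype_apply_of_not_mem
    intro hmem
    exact hmem (Finset.mem_coe.mpr hi)
  -- finite "orbit" sets coming from compactness
  set S : ℕ → Set ℕ := fun x =>
    ⋃ v ∈ (fun τ : Equiv.Perm ℕ => τ x) '' K, (fun σ' : Equiv.Perm ℕ => σ'.symm v) '' K
    with hSdef
  have hSfin : ∀ x, (S x).Finite := by
    intro x
    apply Set.Finite.biUnion
    · exact (hK.image ((continuous_apply x).comp (continuous_fst.comp hf))).finite_of_discrete
    · intro v _
      exact (hK.image ((continuous_apply v).comp (continuous_snd.comp hf))).finite_of_discrete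
  set k : ℕ := 1 + (Finset.range (B.card + 1)).sup (fun x => (hSfin x).toFinset.card) with hkdef
  refine ⟨(fun j : ℕ => σ₀ * ρ ^ j) '' Set.Iic k, (Set.finite_Iic k).image _, ?_, ?_⟩
  · -- M ⊆ U
    rintro _ ⟨j, _, rfl⟩
    apply hUcrit
    · intro i hi
      rw [Equiv.Perm.mul_apply, hfixB j i (Finset.mem_union_left _ hi)]
    · intro y hy
      have hz : σ₀.symm y ∈ B :=
        Finset.mem_union_right _ (Finset.mem_image.mpr ⟨y, hy, rfl⟩)
      have : (σ₀ * ρ ^ j).symm y = (ρ ^ j).symm (σ₀.symm y) := rfl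
      rw [this, Equiv.symm_apply_eq, hfixB j _ hz]
  · -- no two-sided translate of M is inside K
    intro g h hsub
    have hτK : ∀ j ≤ k, g * (σ₀ * ρ ^ j) * h ∈ K := by
      intro j hj
      exact hsub ⟨σ₀ * ρ ^ j, ⟨j, hj, rfl⟩, rfl⟩
    have hσK : g * (σ₀ * ρ ^ 0) * h ∈ K := hτK 0 (Nat.zero_le _)
    -- choose a point x with h x ∉ B
    have hx : ∃ x ∈ Finset.range (B.card + 1), h x ∉ B := by
      by_contra hc
      push_neg at hc
      have hcard : (Finset.range (B.card + 1)).card ≤ B.card :=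
        Finset.card_le_card_of_injOn (fun x => h x) hc (h.injective.injOn)
      rw [Finset.card_range] at hcard
      omega
    obtain ⟨x, hxW, hhx⟩ := hx
    have hhxP : h x ∈ P := by
      intro hmem
      exact hhx (Finset.mem_coe.mp hmem)
    -- the values h.symm (ρ^j (h x)) for j ≤ k are distinct and lie in S x
    have hval : ∀ j, (g * (σ₀ * ρ ^ 0) * h).symm ((g * (σ₀ * ρ ^ j) * h) x)
        = h.symm ((ρ ^ j) (h x)) := by
      intro j
      have e : (g * (σ₀ * ρ ^ 0) * h)⁻¹ * (g * (σ₀ * ρ ^ j) * h) = h⁻¹ * ρ ^ j * h := by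
        rw [pow_zero, mul_one]
        group
      have h5 : (g * (σ₀ * ρ ^ 0) * h).symm ((g * (σ₀ * ρ ^ j) * h) x)
          = ((g * (σ₀ * ρ ^ 0) * h)⁻¹ * (g * (σ₀ * ρ ^ j) * h)) x := rfl
      rw [h5, e]
      rfl
    have hmem : ∀ j ≤ k, h.symm ((ρ ^ j) (h x)) ∈ S x := by
      intro j hj
      rw [← hval j]
      exact Set.mem_biUnion ⟨_, hτK j hj, rfl⟩ ⟨_, hσK, rfl⟩
    have hinj : Set.InjOn (fun j => h.symm ((ρ ^ j) (h x))) ↑(Finset.range (k + 1)) := by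
      intro j _ j' _ heq
      simp only at heq
      have h1 : (ρ ^ j) (h x) = (ρ ^ j') (h x) := h.symm.injective heq
      rw [hρval j _ hhxP, hρval j' _ hhxP] at h1
      have h2 : e₂.symm (e₂ ⟨h x, hhxP⟩ + j) = e₂.symm (e₂ ⟨h x, hhxP⟩ + j') :=
        Subtype.coe_injective h1
      have h3 : e₂ ⟨h x, hhxP⟩ + (j : ℤ) = e₂ ⟨h x, hhxP⟩ + j' := e₂.symm.injective h2
      have h4 : (j : ℤ) = j' := by omega
      exact_mod_cast h4
    have hcount : k + 1 ≤ (hSfin x).toFinset.card := by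
      have := Finset.card_le_card_of_injOn (t := (hSfin x).toFinset) (fun j => h.symm ((ρ ^ j) (h x)))
        (fun j hj => by
          rw [Finset.mem_coe, Set.Finite.mem_toFinset]
          exact hmem j (by simpa using Nat.lt_succ_iff.mp (Finset.mem_range.mp hj)))
        hinj
      simpa using this
    have hsup : (hSfin x).toFinset.card ≤ (Finset.range (B.card + 1)).sup
        (fun x => (hSfin x).toFinset.card) :=
      Finset.le_sup (f := fun x => (hSfin x).toFinset.card) hxW
    omega
end

section
/- Let G be a non-locally compact Polish group which admits a compatible metric d that is translation invariant, i.e., d(g·x·h, g·y·h) = d(x, y) for all g, h, x, y ∈ G. Then every compact subset of G satisfies the finite open translation property (FOTP). -/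
open MeasureTheory

/-- `A` satisfies the finite open translation property: for every nonempty open `U` there is
a finite collection `𝓜` of nonempty open subsets of `U` such that for all `g, h` some
`V ∈ 𝓜` has `g·V·h` disjoint from `A`. -/
def SatisfiesFOTP {G : Type} [Group G] [TopologicalSpace G] (A : Set G) : Prop :=
  ∀ U : Set G, IsOpen U → U.Nonempty →
    ∃ 𝓜 : Set (Set G), 𝓜.Finite ∧ (∀ V ∈ 𝓜, IsOpen V ∧ V.Nonempty ∧ V ⊆ U) ∧
      ∀ g h : G, ∃ V ∈ 𝓜, ((fun v => g * v * h) '' V) ∩ A = ∅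

/-- `A` is strongly Haar meager: there are a Borel `B ⊇ A` and a compact `K ⊆ G` such that
`(g·B·h) ∩ K` is meager in the subspace `K` for all `g, h`. -/
def IsStronglyHaarMeager {G : Type} [Group G] [TopologicalSpace G] (A : Set G) : Prop :=
  ∃ B : Set G, MeasurableSet[borel G] B ∧ A ⊆ B ∧
    ∃ K : Set G, IsCompact K ∧
      ∀ g h : G, IsMeagre ((Subtype.val : K → G) ⁻¹' ((fun b => g * b * h) '' B))


section Aux
open Set Filter Metric TopologicalSpace Topology UniformSpace


open Set Filter Metric TopologicalSpace Topology

private lemma isGδ_preimage' {X Y : Type*} [TopologicalSpace X] [TopologicalSpace Y] {f : X → Y}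
    (hf : Continuous f) {s : Set Y} (hs : IsGδ s) : IsGδ (f ⁻¹' s) := by
  obtain ⟨T, hTo, hTc, rfl⟩ := hs
  rw [Set.preimage_sInter]
  exact IsGδ.biInter hTc fun t ht => ((hTo t ht).preimage hf).isGδ

private lemma isGδ_range_of_isEmbedding {X Y : Type*} [TopologicalSpace X] [PolishSpace X]
    [MetricSpace Y] {f : X → Y} (hf : Topology.IsEmbedding f) : IsGδ (Set.range f) := by
  letI := upgradeIsCompletelyMetrizable X
  set s : ℕ → Set Y := fun n => ⋃₀ {V | IsOpen V ∧ Bornology.IsBounded (f ⁻¹' V) ∧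
    Metric.diam (f ⁻¹' V) ≤ 1 / (n + 1)} with hs
  have hsopen : ∀ n, IsOpen (s n) := fun n => isOpen_sUnion (fun V hV => hV.1)
  have key : Set.range f = closure (Set.range f) ∩ ⋂ n, s n := by
    apply Set.Subset.antisymm
    · rintro y ⟨x, rfl⟩
      refine ⟨subset_closure ⟨x, rfl⟩, Set.mem_iInter.2 fun n => ?_⟩
      have hball : Metric.ball x (1 / (2 * (n + 1))) ∈ 𝓝 x :=
        Metric.ball_mem_nhds _ (by positivity)
      rw [hf.toIsInducing.nhds_eq_comap, Filter.mem_comap] at hball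
      obtain ⟨W, hW, hWsub⟩ := hball
      have hsub : f ⁻¹' interior W ⊆ Metric.ball x (1 / (2 * (n + 1))) :=
        (Set.preimage_mono interior_subset).trans hWsub
      have hbd : Bornology.IsBounded (f ⁻¹' interior W) :=
        Metric.isBounded_ball.subset hsub
      refine ⟨interior W, ⟨isOpen_interior, hbd, ?_⟩, mem_interior_iff_mem_nhds.2 hW⟩
      calc Metric.diam (f ⁻¹' interior W) ≤ Metric.diam (Metric.ball x (1 / (2 * (n + 1)))) :=
            Metric.diam_mono hsub Metric.isBounded_ball
        _ ≤ 2 * (1 / (2 * (n + 1))) := Metric.diam_ball (by positivity)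
        _ = 1 / (n + 1) := by field_simp
    · rintro y ⟨hyc, hyi⟩
      set F : Filter X := Filter.comap f (𝓝 y) with hF
      have hne : F.NeBot := by
        rw [hF, Filter.comap_neBot_iff]
        intro t ht
        obtain ⟨z, hz1, x, rfl⟩ := mem_closure_iff_nhds.1 hyc t ht
        exact ⟨x, hz1⟩
      have hcauchy : Cauchy F := by
        rw [Metric.cauchy_iff]
        refine ⟨hne, fun ε hε => ?_⟩
        obtain ⟨n, hn⟩ := exists_nat_one_div_lt hε
        obtain ⟨V, ⟨hVo, hVb, hVd⟩, hyV⟩ := Set.mem_iInter.1 hyi n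
        refine ⟨f ⁻¹' V, Filter.preimage_mem_comap (hVo.mem_nhds hyV), fun a ha b hb => ?_⟩
        calc dist a b ≤ Metric.diam (f ⁻¹' V) := Metric.dist_le_diam_of_mem hVb ha hb
          _ ≤ 1 / (n + 1) := hVd
          _ < ε := by exact_mod_cast hn
      obtain ⟨x, hx⟩ := CompleteSpace.complete hcauchy
      have h1 : Filter.Tendsto f F (𝓝 (f x)) := (hf.continuous.tendsto x).mono_left hx
      have h2 : Filter.Tendsto f F (𝓝 y) := Filter.map_comap_le
      exact ⟨x, (tendsto_nhds_unique h1 h2)⟩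
  rw [key]
  exact (isClosed_closure.isGδ).inter (IsGδ.iInter fun n => (hsopen n).isGδ)

private lemma aux_completeSpace {H : Type} [AddGroup H] [MetricSpace H] [IsUniformAddGroup H]
    [PolishSpace H] : CompleteSpace H := by
  have hiso : Isometry ((↑) : H → Completion H) := Completion.coe_isometry
  have hGδ : IsGδ (Set.range ((↑) : H → Completion H)) := isGδ_range_of_isEmbedding hiso.isEmbedding
  have hdense : Dense (Set.range ((↑) : H → Completion H)) :=
    (Completion.denseRange_coe (α := H))
  have hres : Set.range ((↑) : H → Completion H) ∈ residual (Completion H) :=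
    residual_of_dense_Gδ hGδ hdense
  have hsurj : Set.range ((↑) : H → Completion H) = Set.univ := by
    by_contra hne
    obtain ⟨y, hy⟩ := (Set.ne_univ_iff_exists_notMem _).1 hne
    set e : Completion H ≃ₜ Completion H := Homeomorph.addLeft y with he
    have himg : e '' Set.range ((↑) : H → Completion H)
        = e.symm ⁻¹' Set.range ((↑) : H → Completion H) := by
      exact e.toEquiv.image_eq_preimage_symm _
    have hGδ2 : IsGδ (e '' Set.range ((↑) : H → Completion H)) := by
      rw [himg]; exact isGδ_preimage' e.symm.continuous hGδ
    have hdense2 : Dense (e '' Set.range ((↑) : H → Completion H)) := by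
      rw [dense_iff_closure_eq, ← Homeomorph.image_closure,
        dense_iff_closure_eq.1 hdense, Set.image_univ, Homeomorph.range_coe]
    have hres2 := residual_of_dense_Gδ hGδ2 hdense2
    have : Nonempty (Completion H) := ⟨0⟩
    obtain ⟨z, ⟨a, ha⟩, hz2⟩ :=
      (dense_of_mem_residual (Filter.inter_mem hres hres2)).nonempty
    obtain ⟨w, ⟨b, hb⟩, hw⟩ := hz2
    -- hw : e w = z, i.e. y + w = z
    apply hy
    have : y = (↑a : Completion H) - ↑b := by
      rw [← hb, ← ha] at hw
      have hw' : y + (↑b : Completion H) = ↑a := by simpa [he] using hw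
      exact eq_sub_of_add_eq hw'
    exact ⟨a - b, by rw [Completion.coe_sub, ← this]⟩
  have hcomp : IsComplete (Set.range ((↑) : H → Completion H)) := by
    rw [hsurj]; exact completeSpace_iff_isComplete_univ.1 inferInstance
  exact (completeSpace_iff_isComplete_range (Completion.isUniformInducing_coe H)).2 hcomp

private lemma completeSpace_of_invariant {G : Type} [Group G] [MetricSpace G] [PolishSpace G]
    (hinv : ∀ g h x y : G, dist (g * x * h) (g * y * h) = dist x y) : CompleteSpace G := by
  have hleft : ∀ g x y : G, dist (g * x) (g * y) = dist x y := fun g x y => by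
    simpa using hinv g 1 x y
  have hright : ∀ h x y : G, dist (x * h) (y * h) = dist x y := fun h x y => by
    simpa using hinv 1 h x y
  have hInv : ∀ x y : G, dist x⁻¹ y⁻¹ = dist x y := fun x y => by
    calc dist x⁻¹ y⁻¹ = dist (x * x⁻¹) (x * y⁻¹) := (hleft x x⁻¹ y⁻¹).symm
      _ = dist (1 * y) (x * y⁻¹ * y) := by rw [mul_inv_cancel, hright y]
      _ = dist y x := by rw [one_mul, inv_mul_cancel_right]
      _ = dist x y := dist_comm y x
  have hdiv : ∀ a b c d : G, dist (a / b) (c / d) ≤ dist a c + dist b d := by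
    intro a b c d
    rw [div_eq_mul_inv, div_eq_mul_inv]
    calc dist (a * b⁻¹) (c * d⁻¹) ≤ dist (a * b⁻¹) (c * b⁻¹) + dist (c * b⁻¹) (c * d⁻¹) :=
          dist_triangle _ _ _
      _ = dist a c + dist b d := by rw [hright b⁻¹, hleft c, hInv]
  letI : IsUniformAddGroup (Additive G) := by
    constructor
    rw [Metric.uniformContinuous_iff]
    intro ε hε
    refine ⟨ε / 2, by positivity, ?_⟩
    rintro ⟨a₁, a₂⟩ ⟨b₁, b₂⟩ hab
    rw [Prod.dist_eq] at hab
    obtain ⟨h1, h2⟩ := max_lt_iff.1 hab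
    have : dist (a₁ - a₂) (b₁ - b₂) = dist (a₁.toMul / a₂.toMul) (b₁.toMul / b₂.toMul) := by
      rw [← dist_toMul, toMul_sub, toMul_sub]
    rw [this]
    calc dist (a₁.toMul / a₂.toMul) (b₁.toMul / b₂.toMul)
        ≤ dist a₁.toMul b₁.toMul + dist a₂.toMul b₂.toMul := hdiv _ _ _ _
      _ < ε / 2 + ε / 2 := by
          exact add_lt_add h1 h2
      _ = ε := by ring
  haveI : PolishSpace (Additive G) := ‹PolishSpace G›
  have : CompleteSpace (Additive G) := aux_completeSpace
  exact this

end Aux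

theorem fotp_of_isCompact_of_invariant_metric {G : Type} [Group G] [MetricSpace G]
    [IsTopologicalGroup G] [PolishSpace G] (hG : ¬ LocallyCompactSpace G)
    (hinv : ∀ g h x y : G, dist (g * x * h) (g * y * h) = dist x y)
    (K : Set G) (hK : IsCompact K) :
    SatisfiesFOTP K := by
  haveI : CompleteSpace G := completeSpace_of_invariant hinv
  intro U hU hUne
  obtain ⟨u, hu⟩ := hUne
  obtain ⟨δ, hδpos, hδ⟩ := Metric.isOpen_iff.1 hU u hu
  -- the ball is not totally bounded
  have hnTB : ¬ TotallyBounded (Metric.ball u δ) := by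
    intro hTB
    apply hG
    have hcb : IsCompact (Metric.closedBall u (δ / 2)) := by
      refine TotallyBounded.isCompact_of_isClosed
        (hTB.subset (Metric.closedBall_subset_ball (by linarith))) Metric.isClosed_closedBall
    haveI : WeaklyLocallyCompactSpace G := by
      constructor
      intro x
      refine ⟨(fun y => x * u⁻¹ * y) '' Metric.closedBall u (δ / 2),
        hcb.image (by continuity), ?_⟩
      have hopen : IsOpen ((fun y => x * u⁻¹ * y) '' Metric.ball u (δ / 2)) :=
        (Homeomorph.mulLeft (x * u⁻¹)).isOpenMap _ Metric.isOpen_ball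
      refine Filter.mem_of_superset (hopen.mem_nhds ?_)
        (Set.image_mono Metric.ball_subset_closedBall)
      exact ⟨u, Metric.mem_ball_self (by positivity), by group⟩
    infer_instance
  -- extract ε
  obtain ⟨ε, hεpos, hsep⟩ : ∃ ε > 0, ∀ t : Set G, t.Finite →
      ¬ (Metric.ball u δ ⊆ ⋃ y ∈ t, Metric.ball y ε) := by
    by_contra hcon
    push_neg at hcon
    exact hnTB (Metric.totallyBounded_iff.2 fun ε hε => hcon ε hε)
  -- choice function producing a far away point
  have hpick : ∀ t : Set G, t.Finite → ∃ p, p ∈ Metric.ball u δ ∧ ∀ y ∈ t, ε ≤ dist y p := by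
    intro t ht
    obtain ⟨p, hp, hp2⟩ := Set.not_subset.1 (hsep t ht)
    refine ⟨p, hp, fun y hy => not_lt.1 fun hlt => hp2 ?_⟩
    exact Set.mem_biUnion hy (by rwa [Metric.mem_ball, dist_comm])
  choose F hFmem hFsep using hpick
  -- build a separated sequence
  let T : ℕ → {s : Set G // s.Finite} := fun n => Nat.rec ⟨∅, Set.finite_empty⟩
    (fun _ ih => ⟨ih.1 ∪ {F ih.1 ih.2}, ih.2.union (Set.finite_singleton _)⟩) n
  let x : ℕ → G := fun n => F (T n).1 (T n).2
  have hTsucc : ∀ n, (T (n + 1)).1 = (T n).1 ∪ {x n} := fun n => rfl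
  have hTmono : ∀ m n, m ≤ n → (T m).1 ⊆ (T n).1 := by
    intro m n hmn
    induction n with
    | zero => simp_all
    | succ k ih =>
      rcases Nat.lt_or_ge m (k + 1) with hc | hc
      · exact (ih (Nat.lt_succ_iff.1 hc)).trans (by rw [hTsucc]; exact Set.subset_union_left)
      · have : m = k + 1 := le_antisymm hmn hc
        subst this; exact subset_rfl
  have hxmem : ∀ n, x n ∈ Metric.ball u δ := fun n => hFmem _ _
  have hxsep : ∀ m n, m < n → ε ≤ dist (x m) (x n) := by
    intro m n hmn
    have hmem : x m ∈ (T n).1 := by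
      have : x m ∈ (T (m + 1)).1 := by rw [hTsucc]; exact Set.mem_union_right _ rfl
      exact hTmono _ _ hmn this
    exact hFsep (T n).1 (T n).2 _ hmem
  -- cover K by finitely many small balls
  obtain ⟨t, htfin, htcov⟩ := Metric.totallyBounded_iff.1 hK.totallyBounded (ε / 4)
    (by positivity)
  haveI := htfin.fintype
  set N := htfin.toFinset.card with hN
  -- the finite family of open sets
  set V : ℕ → Set G := fun i => Metric.ball (x i) (ε / 4) ∩ Metric.ball u δ with hV
  refine ⟨V '' {i | i ≤ N}, (Set.finite_le_nat N).image V, ?_, ?_⟩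
  · rintro W ⟨i, _, rfl⟩
    exact ⟨Metric.isOpen_ball.inter Metric.isOpen_ball,
      ⟨x i, Metric.mem_ball_self (by positivity), hxmem i⟩,
      fun z hz => hδ hz.2⟩
  · intro g h
    by_contra hcon
    push_neg at hcon
    have hex : ∀ i : Fin (N + 1), ∃ v, v ∈ V i.1 ∧ g * v * h ∈ K := by
      intro i
      have := hcon (V i.1) ⟨i.1, Nat.lt_succ_iff.1 i.2, rfl⟩
      obtain ⟨z, hz1, hz2⟩ := this
      obtain ⟨v, hv, rfl⟩ := hz1
      exact ⟨v, hv, hz2⟩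
    choose v hv hvK using hex
    -- each g * v i * h lies in some ball of the covering
    have hcenter : ∀ i : Fin (N + 1), ∃ c : htfin.toFinset,
        g * v i * h ∈ Metric.ball (c : G) (ε / 4) := by
      intro i
      obtain ⟨c, hc, hmem⟩ := Set.mem_iUnion₂.1 (htcov (hvK i))
      exact ⟨⟨c, htfin.mem_toFinset.2 hc⟩, hmem⟩
    choose c hc using hcenter
    have hcard : Fintype.card htfin.toFinset < Fintype.card (Fin (N + 1)) := by
      simp [hN]
    obtain ⟨i, j, hij, hcij⟩ := Fintype.exists_ne_map_eq_of_card_lt c hcard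
    -- distance estimates
    have hxin : ∀ k : Fin (N + 1), dist (g * v k * h) (g * x k.1 * h) < ε / 4 := by
      intro k
      rw [hinv]
      exact (hv k).1
    have hyy : dist (g * v i * h) (g * v j * h) < ε / 2 := by
      have h1 := hc i
      have h2 := hc j
      rw [hcij] at h1
      calc dist (g * v i * h) (g * v j * h)
          ≤ dist (g * v i * h) (c j : G) + dist (c j : G) (g * v j * h) := dist_triangle _ _ _
        _ < ε / 4 + ε / 4 := add_lt_add h1 (by rw [dist_comm]; exact h2)
        _ = ε / 2 := by ring
    have hxx : ε ≤ dist (g * x i.1 * h) (g * x j.1 * h) := by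
      rw [hinv]
      rcases Fin.lt_or_lt_of_ne hij with hlt | hlt
      · exact hxsep _ _ hlt
      · rw [dist_comm]; exact hxsep _ _ hlt
    have : ε < ε := by
      calc ε ≤ dist (g * x i.1 * h) (g * x j.1 * h) := hxx
        _ ≤ dist (g * x i.1 * h) (g * v i * h) + dist (g * v i * h) (g * x j.1 * h) :=
            dist_triangle _ _ _
        _ ≤ dist (g * x i.1 * h) (g * v i * h) + (dist (g * v i * h) (g * v j * h)
            + dist (g * v j * h) (g * x j.1 * h)) :=
            add_le_add_right (dist_triangle _ _ _) _
        _ < ε / 4 + (ε / 2 + ε / 4) := by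
            have hi' : dist (g * x i.1 * h) (g * v i * h) < ε / 4 := by
              rw [dist_comm]; exact hxin i
            exact add_lt_add hi' (add_lt_add hyy (hxin j))
        _ = ε := by ring
    exact lt_irrefl _ this
end

section
/- Let X be a separable reflexive Banach space (i.e., a separable Banach space for which the canonical isometric embedding into the continuous double dual is surjective). Then every bounded, convex, nowhere dense subset A ⊆ X satisfies the finite translation property (FTP): for every nonempty open set U ⊆ X there exists a finite set M ⊆ U such that for all g ∈ X one has M + g ⊄ A. -/
open MeasureTheory

theorem ftp_of_bounded_convex_nowhereDense {X : Type} [NormedAddCommGroup X]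
    [NormedSpace ℝ X] [CompleteSpace X] [TopologicalSpace.SeparableSpace X]
    (hrefl : Function.Surjective ⇑(NormedSpace.inclusionInDoubleDual ℝ X))
    (A : Set X) (hbdd : Bornology.IsBounded A) (hconv : Convex ℝ A)
    (hnwd : IsNowhereDense A) :
    ∀ U : Set X, IsOpen U → U.Nonempty →
      ∃ M : Set X, M.Finite ∧ M ⊆ U ∧
        ∀ g : X, ¬ (fun m => m + g) '' M ⊆ A := by
  classical
  intro U hU hUne
  by_contra hcon
  push_neg at hcon
  obtain ⟨x₀, hx₀U⟩ := hUne
  obtain ⟨r, hr, hball⟩ := Metric.isOpen_iff.mp hU x₀ hx₀U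
  set D := StrongDual ℝ X with hD
  set J : X →L[ℝ] StrongDual ℝ D := NormedSpace.inclusionInDoubleDual ℝ X with hJ
  set C : Set X := closure A with hCdef
  have hCconv : Convex ℝ C := hconv.closure
  have hCclosed : IsClosed C := isClosed_closure
  have hCbdd : Bornology.IsBounded C := hbdd.closure
  -- the embedding into the weak-* double dual
  set L : X →ₗ[ℝ] WeakDual ℝ D :=
    (StrongDual.toWeakDual.toLinearMap.comp (J : X →ₗ[ℝ] StrongDual ℝ D)) with hL
  have hLapp : ∀ (x : X) (f : D), L x f = f x := fun _ _ => rfl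
  have hJinj : Function.Injective ⇑J := by
    intro a b hab
    exact (NormedSpace.eq_iff_forall_dual_eq ℝ).mpr
      fun f => ContinuousLinearMap.ext_iff.mp hab f
  have hLinj : Function.Injective ⇑L := by
    intro a b hab
    exact hJinj (StrongDual.toWeakDual.injective (by exact hab))
  set K₀ : Set (WeakDual ℝ D) := L '' C with hK₀
  -- K₀ is weak-* closed
  have hK₀eq : K₀ = ⋂ (f : D), ⋂ (u : ℝ), ⋂ (_ : ∀ c ∈ C, f c ≤ u),
      {y : WeakDual ℝ D | y f ≤ u} := by
    apply Set.Subset.antisymm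
    · rintro y ⟨c, hc, rfl⟩
      simp only [Set.mem_iInter, Set.mem_setOf_eq]
      intro f u hfu
      exact hfu c hc
    · intro y hy
      simp only [Set.mem_iInter, Set.mem_setOf_eq] at hy
      obtain ⟨x, hx⟩ := hrefl (StrongDual.toWeakDual.symm y)
      have hLx : L x = y := by
        have := congrArg StrongDual.toWeakDual hx
        simp at this
        exact this
      have hxC : x ∈ C := by
        by_contra hxC
        obtain ⟨f, u, hfu, hux⟩ := geometric_hahn_banach_closed_point hCconv hCclosed hxC
        have h1 : y f ≤ u := hy f u (fun c hc => (hfu c hc).le)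
        rw [← hLx] at h1
        exact absurd h1 (not_le.mpr hux)
      exact ⟨x, hxC, hLx⟩
  have hK₀closed : IsClosed K₀ := by
    rw [hK₀eq]
    exact isClosed_iInter fun f => isClosed_iInter fun u => isClosed_iInter fun _ =>
      isClosed_le (WeakDual.eval_continuous f) continuous_const
  have hK₀bdd : Bornology.IsBounded (StrongDual.toWeakDual ⁻¹' K₀) := by
    have : StrongDual.toWeakDual ⁻¹' K₀ = ⇑J '' C := by
      ext z
      constructor
      · rintro ⟨c, hc, hz⟩
        exact ⟨c, hc, StrongDual.toWeakDual.injective (by exact hz)⟩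
      · rintro ⟨c, hc, rfl⟩
        exact ⟨c, hc, rfl⟩
    rw [this]
    exact (NormedSpace.inclusionInDoubleDualLi (E := X) ℝ).lipschitz.isBounded_image hCbdd
  have hK₀cpt : IsCompact K₀ := WeakDual.isCompact_of_bounded_of_closed hK₀bdd hK₀closed
  -- the family of translates
  set t : Metric.ball x₀ r → Set (WeakDual ℝ D) :=
    fun i => (fun y => y - L i.1) '' K₀ with ht
  have htcpt : ∀ i, IsCompact (t i) := fun i =>
    hK₀cpt.image (continuous_sub_right (L i.1))
  have htclosed : ∀ i, IsClosed (t i) := fun i => (htcpt i).isClosed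
  have hx₀ball : x₀ ∈ Metric.ball x₀ r := Metric.mem_ball_self hr
  set i₀ : Metric.ball x₀ r := ⟨x₀, hx₀ball⟩ with hi₀
  -- finite intersection property
  have hfip : ∀ u : Finset (Metric.ball x₀ r), (t i₀ ∩ ⋂ i ∈ u, t i).Nonempty := by
    intro u
    set M : Set X := insert x₀ ((fun i : Metric.ball x₀ r => i.1) '' u) with hM
    have hMfin : M.Finite := Set.Finite.insert _ (u.finite_toSet.image _)
    have hMU : M ⊆ U := by
      rintro m (rfl | ⟨i, _, rfl⟩)
      · exact hx₀U
      · exact hball i.2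
    obtain ⟨g, hg⟩ := hcon M hMfin hMU
    have key : ∀ m ∈ M, L g ∈ (fun y => y - L m) '' K₀ := by
      intro m hm
      have hmA : m + g ∈ A := hg ⟨m, hm, rfl⟩
      refine ⟨L (m + g), ⟨m + g, subset_closure hmA, rfl⟩, ?_⟩
      show L (m + g) - L m = L g
      rw [map_add]
      have h := add_sub_cancel_left (L m) (L g)
      exact h
    refine ⟨L g, key x₀ (Set.mem_insert _ _), ?_⟩
    simp only [Set.mem_iInter]
    intro i hi
    exact key i.1 (Set.mem_insert_of_mem _ ⟨i, hi, rfl⟩)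
  have hne : (t i₀ ∩ ⋂ i, t i).Nonempty :=
    (htcpt i₀).inter_iInter_nonempty t htclosed hfip
  obtain ⟨y, hy₀, hyall⟩ := hne
  obtain ⟨z₀, ⟨c₀, _, rfl⟩, hz₀⟩ := hy₀
  set g : X := c₀ - x₀ with hg
  have hyg : y = L g := by rw [← hz₀, hg, map_sub]
  -- every point of the ball translated by g lies in C
  have hsub : ∀ m ∈ Metric.ball x₀ r, m + g ∈ C := by
    intro m hm
    have := Set.mem_iInter.mp hyall ⟨m, hm⟩
    obtain ⟨z, ⟨c, hc, rfl⟩, hz⟩ := this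
    have hz' : L c - L m = y := by beta_reduce at hz; exact hz
    have : L (g + m) = L c := by
      rw [map_add, ← hyg, ← hz', sub_add_cancel]
    have hgm : g + m = c := hLinj this
    rw [add_comm] at hgm
    rwa [hgm]
  have hball2 : Metric.ball (x₀ + g) r ⊆ C := by
    intro z hz
    have hzg : z - g ∈ Metric.ball x₀ r := by
      rw [Metric.mem_ball] at hz ⊢
      rw [dist_eq_norm] at hz ⊢
      convert hz using 2
      abel
    have := hsub (z - g) hzg
    rwa [sub_add_cancel] at this
  have : (x₀ + g) ∈ interior C :=
    interior_maximal hball2 Metric.isOpen_ball (Metric.mem_ball_self hr)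
  rw [hCdef] at this
  unfold IsNowhereDense at hnwd
  rw [hnwd] at this
  exact this
end

section
/- Let X be a separable reflexive Banach space (i.e., a separable Banach space for which the canonical isometric embedding into the continuous double dual is surjective). Then every convex, nowhere dense subset of X is Haar meager. -/
open MeasureTheory

/-- `A ⊆ G` is Haar meager: there are a Borel `B ⊇ A`, a nonempty compact metric space `K`
and a continuous `f : K → G` with `f⁻¹(B + g)` meager in `K` for every `g`. -/
def IsHaarMeagerAdd {G : Type} [AddGroup G] [TopologicalSpace G] (A : Set G) : Prop :=
  ∃ B : Set G, MeasurableSet[borel G] B ∧ A ⊆ B ∧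
    ∃ (K : Type) (_ : MetricSpace K) (_ : CompactSpace K) (_ : Nonempty K) (f : K → G),
      Continuous f ∧ ∀ g : G, IsMeagre (f ⁻¹' ((fun b => b + g) '' B))

open Set Filter Topology

set_option linter.unusedSectionVars false


open Set Filter Topology

noncomputable section HaarAux

def useq (m : ℕ) : ℝ := ((m:ℝ)+1)⁻¹

lemma useq_pos (m : ℕ) : 0 < useq m := by unfold useq; positivity

lemma useq_lt_iff {a b : ℕ} : useq a < useq b ↔ b < a := by
  unfold useq
  rw [inv_lt_inv₀ (by positivity) (by positivity)]
  constructor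
  · intro h
    have h2 : (b:ℝ) < a := by linarith
    exact_mod_cast h2
  · intro h
    have h2 : (b:ℝ) < a := by exact_mod_cast h
    linarith

lemma useq_inj : Function.Injective useq := by
  intro a b hab
  by_contra h
  rcases Nat.lt_or_ge a b with h' | h'
  · have := useq_lt_iff.mpr h'; rw [hab] at this; exact lt_irrefl _ this
  · rcases Nat.lt_or_ge b a with h'' | h''
    · have := useq_lt_iff.mpr h''; rw [hab] at this; exact lt_irrefl _ this
    · omega

lemma useq_tendsto : Tendsto useq atTop (𝓝 0) := by
  have := tendsto_one_div_add_atTop_nhds_zero_nat (𝕜 := ℝ)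
  exact this.congr (fun n => by simp [useq, one_div])

lemma useq_gap {j m : ℕ} (h : j < m) : useq m + (useq m - useq (m+1)) ≤ useq j := by
  have hm1 : (1:ℝ) ≤ (m:ℝ) := by exact_mod_cast Nat.one_le_iff_ne_zero.mpr (by omega)
  have hj1 : (j:ℝ) + 1 ≤ (m:ℝ) := by exact_mod_cast h
  have h1 : (0:ℝ) < (j:ℝ)+1 := by positivity
  have hm0 : (0:ℝ) < (m:ℝ) := by linarith
  have step1 : ((m:ℝ))⁻¹ ≤ useq j := by
    unfold useq
    exact inv_anti₀ h1 hj1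
  refine le_trans ?_ step1
  unfold useq
  push_cast
  have d1 : ((m:ℝ)+1)⁻¹ - ((m:ℝ)+1+1)⁻¹ = (((m:ℝ)+1) * (((m:ℝ)+1)+1))⁻¹ := by
    rw [inv_sub_inv (by positivity) (by positivity)]
    ring_nf
  have d2 : ((m:ℝ))⁻¹ - ((m:ℝ)+1)⁻¹ = (((m:ℝ)) * ((m:ℝ)+1))⁻¹ := by
    rw [inv_sub_inv (by positivity) (by positivity)]
    ring_nf
  have d3 : (((m:ℝ)+1) * (((m:ℝ)+1)+1))⁻¹ ≤ (((m:ℝ)) * ((m:ℝ)+1))⁻¹ := by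
    apply inv_anti₀ (by positivity) (by nlinarith)
  linarith

def Sset : Set ℝ := insert 0 (Set.range useq)

lemma isCompact_Sset : IsCompact Sset := by
  have h : Tendsto useq cofinite (𝓝 0) := by
    rw [Nat.cofinite_eq_atTop]; exact useq_tendsto
  exact h.isCompact_insert_range_of_cofinite

def s0 : ↥Sset := ⟨0, Set.mem_insert _ _⟩

def sm (m : ℕ) : ↥Sset := ⟨useq m, Set.mem_insert_iff.mpr (Or.inr ⟨m, rfl⟩)⟩

variable {X : Type} [NormedAddCommGroup X] [NormedSpace ℝ X]

def zfun (y : ℕ → X) : ↥Sset → X := fun s =>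
  if h : (s:ℝ) = 0 then 0
  else y (Classical.choose ((Set.mem_insert_iff.mp s.2).resolve_left h))

lemma zfun_s0 (y : ℕ → X) : zfun y s0 = 0 := by
  unfold zfun; rw [dif_pos (show ((s0:ℝ) = 0) from rfl)]

lemma zfun_sm (y : ℕ → X) (m : ℕ) : zfun y (sm m) = y m := by
  unfold zfun
  rw [dif_neg (show ¬((sm m : ℝ) = 0) from (useq_pos m).ne')]
  congr 1
  apply useq_inj
  exact Classical.choose_spec ((Set.mem_insert_iff.mp (sm m).2).resolve_left (useq_pos m).ne')

lemma zfun_eq_of_ne (y : ℕ → X) (s : ↥Sset) (h : (s:ℝ) ≠ 0) :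
    ∃ m : ℕ, useq m = (s:ℝ) ∧ zfun y s = y m := by
  refine ⟨Classical.choose ((Set.mem_insert_iff.mp s.2).resolve_left h),
    Classical.choose_spec ((Set.mem_insert_iff.mp s.2).resolve_left h), ?_⟩
  unfold zfun; rw [dif_neg h]

lemma zfun_norm (y : ℕ → X) {c : ℝ} (hb : ∀ m, ‖y m‖ ≤ c) (hc : 0 ≤ c) (s : ↥Sset) :
    ‖zfun y s‖ ≤ c := by
  unfold zfun
  split
  · simpa using hc
  · exact hb _

lemma zfun_cont (y : ℕ → X) (p : ℕ) (hyp : ∀ m, p ≤ m → y m = 0) :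
    Continuous (zfun y) := by
  rw [continuous_iff_continuousAt]
  intro s
  by_cases h : (s:ℝ) = 0
  · have hnb : {t : ↥Sset | (t:ℝ) < useq p} ∈ 𝓝 s := by
      refine IsOpen.mem_nhds (isOpen_Iio.preimage continuous_subtype_val) ?_
      simp only [Set.mem_setOf_eq, h]
      exact useq_pos p
    have hz : ∀ t ∈ {t : ↥Sset | (t:ℝ) < useq p}, zfun y t = zfun y s := by
      intro t ht
      have hs : zfun y s = 0 := by unfold zfun; rw [dif_pos h]
      rw [hs]
      by_cases h' : (t:ℝ) = 0
      · unfold zfun; rw [dif_pos h']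
      · obtain ⟨m, hm, hm2⟩ := zfun_eq_of_ne y t h'
        rw [hm2]
        apply hyp
        have : useq m < useq p := by rw [hm]; exact ht
        exact le_of_lt (useq_lt_iff.mp this)
    exact (continuousAt_const (y := zfun y s)).congr
      (Filter.eventuallyEq_of_mem hnb hz).symm
  · obtain ⟨m, hm, hm2⟩ := zfun_eq_of_ne y s h
    set V : Set ↥Sset := {t : ↥Sset | useq (m+1) < (t:ℝ) ∧ (t:ℝ) < useq m + (useq m - useq (m+1))}
    have hnb : V ∈ 𝓝 s := by
      refine IsOpen.mem_nhds ?_ ?_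
      · exact (isOpen_Ioo.preimage continuous_subtype_val)
      · constructor
        · rw [← hm]; exact useq_lt_iff.mpr (by omega)
        · rw [← hm]
          have : useq (m+1) < useq m := useq_lt_iff.mpr (by omega)
          linarith
    have hz : ∀ t ∈ V, zfun y t = zfun y s := by
      intro t ht
      have h' : (t:ℝ) ≠ 0 := by
        have := ht.1
        have hp := useq_pos (m+1)
        intro h0; rw [h0] at this; linarith
      obtain ⟨j, hj, hj2⟩ := zfun_eq_of_ne y t h'
      have hjm : j = m := by
        by_contra hne
        rcases Nat.lt_or_ge j m with hlt | hge
        · have := useq_gap hlt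
          have h2 := ht.2; rw [← hj] at h2
          linarith
        · have hj' : m + 1 ≤ j := by omega
          have hle : useq j ≤ useq (m+1) := by
            rcases eq_or_lt_of_le hj' with he | hl
            · rw [← he]
            · exact le_of_lt (useq_lt_iff.mpr hl)
          have h1 := ht.1; rw [← hj] at h1
          linarith
      rw [hj2, hjm, hm2]
    exact (continuousAt_const (y := zfun y s)).congr
      (Filter.eventuallyEq_of_mem hnb hz).symm

end HaarAux

section HaarAux2


lemma lemA {X : Type} [NormedAddCommGroup X] [NormedSpace ℝ X]
    (hrefl : Function.Surjective ⇑(NormedSpace.inclusionInDoubleDual ℝ X))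
    (D : ℕ → Set X) (R : ℝ)
    (hne : ∀ n, (D n).Nonempty) (hcl : ∀ n, IsClosed (D n)) (hcv : ∀ n, Convex ℝ (D n))
    (hanti : ∀ n, D (n+1) ⊆ D n) (hbd : ∀ n, ∀ x ∈ D n, ‖x‖ ≤ R) :
    (⋂ n, D n).Nonempty := by
  classical
  set E := StrongDual ℝ X with hE
  set J := NormedSpace.inclusionInDoubleDual ℝ X with hJ
  let q : X → WeakDual ℝ E := fun x => StrongDual.toWeakDual (J x)
  let F : ℕ → Set (WeakDual ℝ E) := fun n => closure (q '' D n)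
  have hBl : IsCompact (WeakDual.toStrongDual ⁻¹' Metric.closedBall (0 : StrongDual ℝ E) R) :=
    WeakDual.isCompact_closedBall 0 R
  have hFsub : ∀ n, F n ⊆ WeakDual.toStrongDual ⁻¹' Metric.closedBall 0 R := by
    intro n
    apply closure_minimal _ (WeakDual.isClosed_closedBall 0 R)
    rintro _ ⟨x, hx, rfl⟩
    simp only [Set.mem_preimage, Metric.mem_closedBall, dist_zero_right]
    calc ‖WeakDual.toStrongDual (q x)‖ = ‖J x‖ := rfl
      _ ≤ ‖x‖ := NormedSpace.double_dual_bound ℝ X x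
      _ ≤ R := hbd n x hx
  have hFcomp : ∀ n, IsCompact (F n) := fun n =>
    hBl.of_isClosed_subset isClosed_closure (hFsub n)
  have hFne : ∀ n, (F n).Nonempty := fun n => ((hne n).image q).closure
  have hFanti : ∀ n, F (n+1) ⊆ F n := fun n =>
    closure_mono (Set.image_mono (hanti n))
  obtain ⟨Φ, hΦ⟩ := IsCompact.nonempty_iInter_of_sequence_nonempty_isCompact_isClosed
    F hFanti hFne (hFcomp 0) (fun n => isClosed_closure)
  obtain ⟨g, hg⟩ := hrefl (WeakDual.toStrongDual Φ)
  refine ⟨g, Set.mem_iInter.2 fun n => ?_⟩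
  by_contra hgn
  obtain ⟨φ, u, hu1, hu2⟩ := geometric_hahn_banach_closed_point (hcv n) (hcl n) hgn
  have hΦn : Φ ∈ F n := Set.mem_iInter.1 hΦ n
  have hopen : IsOpen {Ψ : WeakDual ℝ E | u < Ψ φ} :=
    isOpen_Ioi.preimage (WeakDual.eval_continuous φ)
  have hΦmem : Φ ∈ {Ψ : WeakDual ℝ E | u < Ψ φ} := by
    have h1 : Φ φ = (J g) φ := by
      rw [hg]; rfl
    have h2 : (J g) φ = φ g := rfl
    simpa [Set.mem_setOf_eq, h1, h2] using hu2
  obtain ⟨Ψ, hΨO, hΨm⟩ := (mem_closure_iff.1 hΦn) _ hopen hΦmem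
  obtain ⟨x, hxD, rfl⟩ := hΨm
  have : φ x < u := hu1 x hxD
  have : u < φ x := hΨO
  linarith




lemma lemB {X : Type} [NormedAddCommGroup X] [NormedSpace ℝ X]
    [TopologicalSpace.SeparableSpace X]
    (hrefl : Function.Surjective ⇑(NormedSpace.inclusionInDoubleDual ℝ X))
    (C : Set X) (hC : IsClosed C) (hconv : Convex ℝ C)
    (hint : interior C = ∅) {ε : ℝ} (hε : 0 < ε) (R : ℝ) :
    ∃ (y : ℕ → X) (p : ℕ), (∀ i, ‖y i‖ ≤ ε) ∧ (∀ i, p ≤ i → y i = 0) ∧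
      (∀ g : X, ‖g‖ ≤ R → ∃ i, g + y i ∉ C) := by
  classical
  by_contra hcon
  push_neg at hcon
  haveI : Nonempty X := ⟨0⟩
  obtain ⟨w, hw⟩ := TopologicalSpace.exists_dense_seq X
  set v : ℕ → X := fun j => if ‖w j‖ < ε then w j else 0 with hv
  have hv_norm : ∀ j, ‖v j‖ ≤ ε := by
    intro j
    by_cases h : ‖w j‖ < ε <;> simp [hv, h, le_of_lt, hε.le]
  set D : ℕ → Set X := fun n =>
    Metric.closedBall 0 |R| ∩ ⋂ j ∈ Finset.range (n+1), {x : X | x + v j ∈ C} with hD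
  have hconv_j : ∀ j, Convex ℝ {x : X | x + v j ∈ C} := by
    intro j x hx y hy a b ha hb hab
    simp only [mem_setOf_eq] at *
    have hrw : a • x + b • y + v j = a • (x + v j) + b • (y + v j) := by
      rw [smul_add, smul_add, add_add_add_comm, ← add_smul, hab, one_smul]
    rw [hrw]
    exact hconv hx hy ha hb hab
  have hne : ∀ n, (D n).Nonempty := by
    intro n
    obtain ⟨g, hgR, hgC⟩ := hcon (fun i => if i ≤ n then v i else 0) (n+1)
      (by intro i; by_cases h : i ≤ n <;> simp [h, hv_norm, hε.le])
      (by intro i hi; simp [Nat.lt_irrefl, show ¬ i ≤ n by omega])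
    refine ⟨g, ?_, ?_⟩
    · simpa [Metric.mem_closedBall, dist_zero_right] using hgR.trans (le_abs_self R)
    · simp only [Set.mem_iInter, Finset.mem_range]
      intro j hj
      have := hgC j
      simpa [show j ≤ n by omega] using this
  have hcl' : ∀ n, IsClosed (D n) := by
    intro n
    refine Metric.isClosed_closedBall.inter (isClosed_biInter fun j _ => ?_)
    exact hC.preimage (continuous_id.add continuous_const)
  have hcv : ∀ n, Convex ℝ (D n) := by
    intro n
    refine (convex_closedBall (0:X) |R|).inter ?_
    exact convex_iInter fun j => convex_iInter fun _ => hconv_j j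
  have hanti : ∀ n, D (n+1) ⊆ D n := by
    intro n x hx
    refine ⟨hx.1, ?_⟩
    have h2 := hx.2
    simp only [Set.mem_iInter, Finset.mem_range] at h2 ⊢
    intro j hj
    exact h2 j (by omega)
  have hbd : ∀ n, ∀ x ∈ D n, ‖x‖ ≤ |R| := by
    intro n x hx
    simpa [Metric.mem_closedBall, dist_zero_right] using hx.1
  obtain ⟨g, hg⟩ := lemA hrefl D |R| hne hcl' hcv hanti hbd
  have hgC : ∀ j, g + v j ∈ C := by
    intro j
    have := (Set.mem_iInter.1 hg j).2
    simp only [Set.mem_iInter, Finset.mem_range] at this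
    exact this j (by omega)
  have hball : Metric.ball g ε ⊆ C := by
    intro x hx
    rw [← hC.closure_eq]
    rw [Metric.mem_closure_iff]
    intro δ hδ
    have hd : ‖x - g‖ < ε := by
      simpa [dist_eq_norm] using hx
    have hr : (0:ℝ) < min δ (ε - ‖x - g‖) := lt_min hδ (by linarith)
    obtain ⟨j, hj⟩ := hw.exists_dist_lt (x - g) hr
    have hwj : ‖w j‖ < ε := by
      have h1 : ‖w j‖ ≤ dist (x - g) (w j) + ‖x - g‖ := by
        rw [dist_comm, dist_eq_norm]
        have := norm_add_le (w j - (x - g)) (x - g)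
        simpa using this
      have h2 : dist (x - g) (w j) < ε - ‖x - g‖ := lt_of_lt_of_le hj (min_le_right _ _)
      linarith
    refine ⟨g + v j, hgC j, ?_⟩
    have : v j = w j := if_pos hwj
    rw [this, dist_eq_norm]
    have heq : x - (g + w j) = (x - g) - w j := by abel
    rw [heq, ← dist_eq_norm]
    exact lt_of_lt_of_le hj (min_le_left _ _)
  have : g ∈ interior C := interior_maximal hball Metric.isOpen_ball (Metric.mem_ball_self hε)
  rw [hint] at this
  exact this

end HaarAux2

theorem haarMeager_of_convex_nowhereDense {X : Type} [NormedAddCommGroup X]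
    [NormedSpace ℝ X] [CompleteSpace X] [TopologicalSpace.SeparableSpace X]
    (hrefl : Function.Surjective ⇑(NormedSpace.inclusionInDoubleDual ℝ X))
    (A : Set X) (hconv : Convex ℝ A) (hnwd : IsNowhereDense A) :
    IsHaarMeagerAdd A := by
  classical
  set C := closure A with hCdef
  have hCcl : IsClosed C := isClosed_closure
  have hCconv : Convex ℝ C := hconv.closure
  have hCint : interior C = ∅ := hnwd
  have hblocks : ∀ k : ℕ, ∃ (y : ℕ → X) (p : ℕ), (∀ i, ‖y i‖ ≤ (1/2:ℝ)^k) ∧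
      (∀ i, p ≤ i → y i = 0) ∧ (∀ g : X, ‖g‖ ≤ (k:ℝ) → ∃ i, g + y i ∉ C) :=
    fun k => lemB hrefl C hCcl hCconv hCint (by positivity) (k:ℝ)
  choose Y P hYnorm hY0 hYdef using hblocks
  haveI hScomp : CompactSpace ↥Sset := isCompact_iff_compactSpace.mp isCompact_Sset
  set K := ℕ → ↥Sset with hK
  haveI : Nonempty K := ⟨fun _ => s0⟩
  haveI : TopologicalSpace.MetrizableSpace K := by infer_instance
  letI mK : MetricSpace K := TopologicalSpace.metrizableSpaceMetric K
  set f : K → X := fun t => ∑' k, zfun (Y k) (t k) with hf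
  have hfcont : Continuous f := by
    apply continuous_tsum
    · exact fun k => (zfun_cont (Y k) (P k) (hY0 k)).comp (continuous_apply k)
    · exact summable_geometric_two
    · exact fun k t => zfun_norm (Y k) (hYnorm k) (by positivity) (t k)
  refine ⟨C, ?_, subset_closure, K, mK, inferInstance, inferInstance, f, hfcont, ?_⟩
  · letI : MeasurableSpace X := borel X
    haveI : BorelSpace X := ⟨rfl⟩
    exact hCcl.measurableSet
  intro g
  have hclosed : IsClosed (f ⁻¹' ((fun b => b + g) '' C)) := by
    apply IsClosed.preimage hfcont
    have himg : (fun b => b + g) '' C = (Homeomorph.addRight g) '' C := rfl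
    rw [himg]
    exact (Homeomorph.addRight g).isClosedMap C hCcl
  have hint : interior (f ⁻¹' ((fun b => b + g) '' C)) = ∅ := by
    rw [Set.eq_empty_iff_forall_notMem]
    intro t₀ ht₀
    have hU : f ⁻¹' ((fun b => b + g) '' C) ∈ 𝓝 t₀ :=
      mem_interior_iff_mem_nhds.mp ht₀
    rw [nhds_pi] at hU
    obtain ⟨I, V, hV, hIV⟩ := Filter.mem_pi'.mp hU
    set w : X := ∑ k ∈ I, zfun (Y k) (t₀ k) with hw
    set k₀ : ℕ := max (I.sup id + 1) ⌈‖w - g‖⌉₊ with hk₀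
    have hk₀I : k₀ ∉ I := by
      intro hmem
      have h1 : k₀ ≤ I.sup id := Finset.le_sup (f := id) hmem
      have h2 : I.sup id + 1 ≤ k₀ := le_max_left _ _
      omega
    have hnormle : ‖w - g‖ ≤ (k₀:ℝ) := by
      refine le_trans (Nat.le_ceil _) ?_
      exact_mod_cast le_max_right (I.sup id + 1) ⌈‖w - g‖⌉₊
    obtain ⟨i, hi⟩ := hYdef k₀ (w - g) hnormle
    set t : K := fun k => if k ∈ I then t₀ k else if k = k₀ then sm i else s0 with ht
    have htV : t ∈ Set.pi ↑I V := by
      intro k hk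
      simp only [ht, Finset.mem_coe] at hk ⊢
      rw [if_pos hk]
      exact mem_of_mem_nhds (hV k)
    have htBad : f t ∈ (fun b => b + g) '' C := hIV htV
    have hft : f t = zfun (Y k₀) (sm i) + w := by
      have hsum : f t = ∑ k ∈ insert k₀ I, zfun (Y k) (t k) := by
        apply tsum_eq_sum
        intro k hk
        simp only [Finset.mem_insert, not_or] at hk
        have : t k = s0 := by
          simp only [ht]
          rw [if_neg hk.2, if_neg hk.1]
        rw [this, zfun_s0]
      rw [hsum, Finset.sum_insert hk₀I]
      congr 1
      · congr 1
        simp only [ht]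
        simp [hk₀I]
      · apply Finset.sum_congr rfl
        intro k hk
        congr 1
        simp only [ht]
        rw [if_pos hk]
    obtain ⟨b, hbC, hb⟩ := htBad
    apply hi
    have hbeq : (w - g) + Y k₀ i = b := by
      rw [zfun_sm] at hft
      have hb' : b + g = f t := hb
      have hbft : b = f t - g := by rw [← hb']; abel
      rw [hbft, hft]; abel
    rw [hbeq]
    exact hbC
  have hnwd' : IsNowhereDense (f ⁻¹' ((fun b => b + g) '' C)) :=
    hclosed.isNowhereDense_iff.mpr hint
  rw [isMeagre_iff_countable_union_isNowhereDense]
  exact ⟨{f ⁻¹' ((fun b => b + g) '' C)}, by simpa using hnwd',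
    Set.countable_singleton _, by simp⟩
end
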